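/- arXiv:2301.00898 — 3 statements merged into one kernel-verified Lean document; each statement's English description precedes it below -/
import Mathlib

section
/- Let n ≥ 3 and let λ be a partition of n with a_k parts equal to k. Over the conjugacy class C_λ: the average number of cyclic double ascents and the average number of cyclic double descents both equal (n − a_1 − 2a_2)/6, and the average number of cyclic valleys and the average number of cyclic peaks both equal (n − a_1 + a_2)/3. -/
/-- The conjugacy class of `S_n` consisting of permutations of cycle type `lam`
(Mathlib's `cycleType` omits fixed points, so we compare with the parts of `lam` not equal
to `1`). -/
noncomputable def conjClass (n : ℕ) (lam : n.Partition) : Finset (Equiv.Perm (Fin n)) :=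
  Finset.univ.filter fun ω => ω.cycleType = Multiset.filter (fun i => i ≠ 1) lam.parts

/-- The number of cyclic valleys: indices `i` with `ω⁻¹ i > i < ω i`. -/
def cv {n : ℕ} (ω : Equiv.Perm (Fin n)) : ℕ :=
  (Finset.univ.filter fun i : Fin n => i < ω⁻¹ i ∧ i < ω i).card

/-- The number of cyclic peaks: indices `i` with `ω⁻¹ i < i > ω i`. -/
def cpk {n : ℕ} (ω : Equiv.Perm (Fin n)) : ℕ :=
  (Finset.univ.filter fun i : Fin n => ω⁻¹ i < i ∧ ω i < i).card

/-- The number of cyclic double ascents: indices `i` with `ω⁻¹ i < i < ω i`. -/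
def cda {n : ℕ} (ω : Equiv.Perm (Fin n)) : ℕ :=
  (Finset.univ.filter fun i : Fin n => ω⁻¹ i < i ∧ i < ω i).card

/-- The number of cyclic double descents: indices `i` with `ω⁻¹ i > i > ω i`. -/
def cdd {n : ℕ} (ω : Equiv.Perm (Fin n)) : ℕ :=
  (Finset.univ.filter fun i : Fin n => i < ω⁻¹ i ∧ ω i < i).card

open Finset Equiv Equiv.Perm

namespace Stmt11Aux

variable {n : ℕ}

section Maps
variable {α : Type*} [DecidableEq α]

lemma exists_perm_map2 {i a i' a' : α} (h : i ≠ a) (h' : i' ≠ a') :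
    ∃ τ : Equiv.Perm α, τ i = i' ∧ τ a = a' := by
  set a1 := Equiv.swap i i' a with ha1
  have hi1 : Equiv.swap i i' i = i' := Equiv.swap_apply_left _ _
  have ha1i' : a1 ≠ i' := by
    intro hh
    exact h (Equiv.injective (Equiv.swap i i') (by rw [hi1, ← ha1, hh]))
  refine ⟨Equiv.swap a1 a' * Equiv.swap i i', ?_, ?_⟩
  · simp only [Equiv.Perm.mul_apply, hi1]
    exact Equiv.swap_apply_of_ne_of_ne ha1i'.symm h'
  · simp only [Equiv.Perm.mul_apply, ← ha1, Equiv.swap_apply_left]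

lemma exists_perm_map3 {i a b i' a' b' : α} (h1 : i ≠ a) (h2 : i ≠ b) (h3 : a ≠ b)
    (h1' : i' ≠ a') (h2' : i' ≠ b') (h3' : a' ≠ b') :
    ∃ τ : Equiv.Perm α, τ i = i' ∧ τ a = a' ∧ τ b = b' := by
  set τ1 := Equiv.swap i i' with hτ1
  set a1 := τ1 a with ha1
  set b1 := τ1 b with hb1
  have hi1 : τ1 i = i' := Equiv.swap_apply_left _ _
  have ha1i' : a1 ≠ i' := fun hh => h1 (Equiv.injective τ1 (by rw [hi1, ← ha1, hh]))
  have hb1i' : b1 ≠ i' := fun hh => h2 (Equiv.injective τ1 (by rw [hi1, ← hb1, hh]))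
  have ha1b1 : a1 ≠ b1 := fun hh => h3 (Equiv.injective τ1 hh)
  set τ2 := Equiv.swap a1 a' with hτ2
  have hi2 : τ2 i' = i' := Equiv.swap_apply_of_ne_of_ne ha1i'.symm h1'
  have ha2 : τ2 a1 = a' := Equiv.swap_apply_left _ _
  set b2 := τ2 b1 with hb2
  have hb2i' : b2 ≠ i' := fun hh => hb1i' (Equiv.injective τ2 (by rw [hi2, ← hb2, hh]))
  have hb2a' : b2 ≠ a' := fun hh => ha1b1.symm (Equiv.injective τ2 (by rw [ha2, ← hb2, hh]))
  set τ3 := Equiv.swap b2 b' with hτ3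
  have hi3 : τ3 i' = i' := Equiv.swap_apply_of_ne_of_ne hb2i'.symm h2'
  have ha3 : τ3 a' = a' := Equiv.swap_apply_of_ne_of_ne hb2a'.symm h3'
  have hb3 : τ3 b2 = b' := Equiv.swap_apply_left _ _
  refine ⟨τ3 * τ2 * τ1, ?_, ?_, ?_⟩
  · simp only [Equiv.Perm.mul_apply, hi1, hi2, hi3]
  · simp only [Equiv.Perm.mul_apply, ← ha1, ha2, ha3]
  · simp only [Equiv.Perm.mul_apply, ← hb1, ← hb2, hb3]

end Maps

variable {n : ℕ}

/-- number of permutations sending j↦i, x↦a, y↦b -/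
def cnt3 (n : ℕ) (j x y i a b : Fin n) : ℕ :=
  (univ.filter fun σ : Equiv.Perm (Fin n) => σ j = i ∧ σ x = a ∧ σ y = b).card

def cnt2 (n : ℕ) (j x i a : Fin n) : ℕ :=
  (univ.filter fun σ : Equiv.Perm (Fin n) => σ j = i ∧ σ x = a).card

def D3 (n : ℕ) : Finset (Fin n × Fin n × Fin n) :=
  univ.filter fun t => t.1 ≠ t.2.1 ∧ t.1 ≠ t.2.2 ∧ t.2.1 ≠ t.2.2

def D2 (n : ℕ) : Finset (Fin n × Fin n) := univ.filter fun t => t.1 ≠ t.2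

lemma cnt3_const (j x y : Fin n) {i a b i' a' b' : Fin n}
    (h1 : i ≠ a) (h2 : i ≠ b) (h3 : a ≠ b)
    (h1' : i' ≠ a') (h2' : i' ≠ b') (h3' : a' ≠ b') :
    cnt3 n j x y i a b = cnt3 n j x y i' a' b' := by
  obtain ⟨τ, hτ1, hτ2, hτ3⟩ := exists_perm_map3 h1 h2 h3 h1' h2' h3'
  unfold cnt3
  refine Finset.card_bij' (fun σ _ => τ * σ) (fun σ _ => τ⁻¹ * σ) ?_ ?_ ?_ ?_
  · intro σ hσ
    simp only [mem_filter, mem_univ, true_and, Equiv.Perm.mul_apply] at hσ ⊢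
    exact ⟨by rw [hσ.1, hτ1], by rw [hσ.2.1, hτ2], by rw [hσ.2.2, hτ3]⟩
  · intro σ hσ
    simp only [mem_filter, mem_univ, true_and, Equiv.Perm.mul_apply] at hσ ⊢
    refine ⟨?_, ?_, ?_⟩
    · rw [hσ.1, ← hτ1]; simp
    · rw [hσ.2.1, ← hτ2]; simp
    · rw [hσ.2.2, ← hτ3]; simp
  · intro σ _; simp [mul_assoc]
  · intro σ _; simp [mul_assoc]

lemma cnt2_const (j x : Fin n) {i a i' a' : Fin n}
    (h1 : i ≠ a) (h1' : i' ≠ a') :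
    cnt2 n j x i a = cnt2 n j x i' a' := by
  obtain ⟨τ, hτ1, hτ2⟩ := exists_perm_map2 h1 h1'
  unfold cnt2
  refine Finset.card_bij' (fun σ _ => τ * σ) (fun σ _ => τ⁻¹ * σ) ?_ ?_ ?_ ?_
  · intro σ hσ
    simp only [mem_filter, mem_univ, true_and, Equiv.Perm.mul_apply] at hσ ⊢
    exact ⟨by rw [hσ.1, hτ1], by rw [hσ.2, hτ2]⟩
  · intro σ hσ
    simp only [mem_filter, mem_univ, true_and, Equiv.Perm.mul_apply] at hσ ⊢
    exact ⟨by rw [hσ.1, ← hτ1]; simp, by rw [hσ.2, ← hτ2]; simp⟩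
  · intro σ _; simp [mul_assoc]
  · intro σ _; simp [mul_assoc]

lemma sum_cnt3 {j x y : Fin n} (hjx : j ≠ x) (hjy : j ≠ y) (hxy : x ≠ y) :
    ∑ t ∈ D3 n, cnt3 n j x y t.1 t.2.1 t.2.2 = (univ : Finset (Equiv.Perm (Fin n))).card := by
  symm
  rw [Finset.card_eq_sum_card_fiberwise
    (f := fun σ : Equiv.Perm (Fin n) => (σ j, σ x, σ y)) (t := D3 n)
    (fun σ _ => by
      simp only [D3, Finset.mem_coe, mem_filter, mem_univ, true_and]
      exact ⟨fun h => hjx (σ.injective h), fun h => hjy (σ.injective h),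
        fun h => hxy (σ.injective h)⟩)]
  refine Finset.sum_congr rfl fun t _ => ?_
  unfold cnt3
  congr 1
  apply Finset.filter_congr
  intro σ _
  constructor
  · intro h; rw [Prod.ext_iff, Prod.ext_iff] at h; exact ⟨h.1, h.2.1, h.2.2⟩
  · intro h; exact Prod.ext h.1 (Prod.ext h.2.1 h.2.2)

lemma sum_cnt2 {j x : Fin n} (hjx : j ≠ x) :
    ∑ t ∈ D2 n, cnt2 n j x t.1 t.2 = (univ : Finset (Equiv.Perm (Fin n))).card := by
  symm
  rw [Finset.card_eq_sum_card_fiberwise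
    (f := fun σ : Equiv.Perm (Fin n) => (σ j, σ x)) (t := D2 n)
    (fun σ _ => by
      simp only [D2, Finset.mem_coe, mem_filter, mem_univ, true_and]
      exact fun h => hjx (σ.injective h))]
  refine Finset.sum_congr rfl fun t _ => ?_
  unfold cnt2
  congr 1
  apply Finset.filter_congr
  intro σ _
  constructor
  · intro h; rw [Prod.ext_iff] at h; exact h
  · intro h; exact Prod.ext h.1 h.2

lemma cnt3_mul {j x y i a b : Fin n} (hjx : j ≠ x) (hjy : j ≠ y) (hxy : x ≠ y)
    (h1 : i ≠ a) (h2 : i ≠ b) (h3 : a ≠ b) :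
    (D3 n).card * cnt3 n j x y i a b = (univ : Finset (Equiv.Perm (Fin n))).card := by
  rw [← sum_cnt3 hjx hjy hxy, Finset.card_eq_sum_ones (D3 n), Finset.sum_mul]
  refine Finset.sum_congr rfl fun t ht => ?_
  simp only [D3, mem_filter, mem_univ, true_and] at ht
  rw [one_mul]
  exact cnt3_const j x y h1 h2 h3 ht.1 ht.2.1 ht.2.2

lemma cnt2_mul {j x i a : Fin n} (hjx : j ≠ x) (h1 : i ≠ a) :
    (D2 n).card * cnt2 n j x i a = (univ : Finset (Equiv.Perm (Fin n))).card := by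
  rw [← sum_cnt2 hjx, Finset.card_eq_sum_ones (D2 n), Finset.sum_mul]
  refine Finset.sum_congr rfl fun t ht => ?_
  simp only [D2, mem_filter, mem_univ, true_and] at ht
  rw [one_mul]
  exact cnt2_const j x h1 ht


lemma card_filter_equiv {β : Type*} [Fintype β] [DecidableEq β] (e : β ≃ β) (p : β → Prop)
    [DecidablePred p] :
    (univ.filter fun t => p (e t)).card = (univ.filter p).card := by
  refine Finset.card_bij' (fun t _ => e t) (fun t _ => e.symm t) ?_ ?_ ?_ ?_ <;>
    simp [mem_filter]

lemma not_lt_iff_of_ne {a b : Fin n} (h : a ≠ b) : ¬ a < b ↔ b < a :=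
  ⟨fun hh => h.lt_or_gt.resolve_left hh, fun hh h2 => lt_asymm hh h2⟩

def S3 (n : ℕ) : Finset (Fin n × Fin n × Fin n) :=
  univ.filter fun t => t.1 < t.2.1 ∧ t.2.1 < t.2.2

lemma cls2_card : (univ.filter fun t : Fin n × Fin n × Fin n => t.1 < t.2.2 ∧ t.2.2 < t.2.1).card
    = (S3 n).card :=
  card_filter_equiv ⟨fun t => (t.1, t.2.2, t.2.1), fun t => (t.1, t.2.2, t.2.1),
    fun t => rfl, fun t => rfl⟩ (fun t => t.1 < t.2.1 ∧ t.2.1 < t.2.2)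

lemma cls3_card : (univ.filter fun t : Fin n × Fin n × Fin n => t.2.1 < t.1 ∧ t.1 < t.2.2).card
    = (S3 n).card :=
  card_filter_equiv ⟨fun t => (t.2.1, t.1, t.2.2), fun t => (t.2.1, t.1, t.2.2),
    fun t => rfl, fun t => rfl⟩ (fun t => t.1 < t.2.1 ∧ t.2.1 < t.2.2)

lemma cls4_card : (univ.filter fun t : Fin n × Fin n × Fin n => t.2.2 < t.1 ∧ t.1 < t.2.1).card
    = (S3 n).card :=
  card_filter_equiv ⟨fun t => (t.2.2, t.1, t.2.1), fun t => (t.2.1, t.2.2, t.1),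
    fun t => rfl, fun t => rfl⟩ (fun t => t.1 < t.2.1 ∧ t.2.1 < t.2.2)

lemma cls5_card : (univ.filter fun t : Fin n × Fin n × Fin n => t.2.1 < t.2.2 ∧ t.2.2 < t.1).card
    = (S3 n).card :=
  card_filter_equiv ⟨fun t => (t.2.1, t.2.2, t.1), fun t => (t.2.2, t.1, t.2.1),
    fun t => rfl, fun t => rfl⟩ (fun t => t.1 < t.2.1 ∧ t.2.1 < t.2.2)

lemma cls6_card : (univ.filter fun t : Fin n × Fin n × Fin n => t.2.2 < t.2.1 ∧ t.2.1 < t.1).card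
    = (S3 n).card :=
  card_filter_equiv ⟨fun t => (t.2.2, t.2.1, t.1), fun t => (t.2.2, t.2.1, t.1),
    fun t => rfl, fun t => rfl⟩ (fun t => t.1 < t.2.1 ∧ t.2.1 < t.2.2)

lemma D3_card_split : (D3 n).card
    = (univ.filter fun t : Fin n × Fin n × Fin n => t.1 < t.2.1 ∧ t.2.1 < t.2.2).card
    + (univ.filter fun t : Fin n × Fin n × Fin n => t.1 < t.2.2 ∧ t.2.2 < t.2.1).card
    + (univ.filter fun t : Fin n × Fin n × Fin n => t.2.1 < t.1 ∧ t.1 < t.2.2).card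
    + (univ.filter fun t : Fin n × Fin n × Fin n => t.2.2 < t.1 ∧ t.1 < t.2.1).card
    + (univ.filter fun t : Fin n × Fin n × Fin n => t.2.1 < t.2.2 ∧ t.2.2 < t.1).card
    + (univ.filter fun t : Fin n × Fin n × Fin n => t.2.2 < t.2.1 ∧ t.2.1 < t.1).card := by
  classical
  have base : ∀ t : Fin n × Fin n × Fin n, t ∈ D3 n →
      t.1 ≠ t.2.1 ∧ t.1 ≠ t.2.2 ∧ t.2.1 ≠ t.2.2 := by
    intro t ht; simpa [D3] using ht
  have conv : ∀ (p : Fin n × Fin n × Fin n → Prop) [DecidablePred p],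
      (∀ t, p t → t.1 ≠ t.2.1 ∧ t.1 ≠ t.2.2 ∧ t.2.1 ≠ t.2.2) →
      (univ.filter p) = (D3 n).filter p := by
    intro p _ hp
    ext t
    simp only [mem_filter, mem_univ, true_and, D3]
    exact ⟨fun h => ⟨hp t h, h⟩, fun h => h.2⟩
  rw [conv _ (fun t h => ⟨ne_of_lt h.1, ne_of_lt (h.1.trans h.2), ne_of_lt h.2⟩),
      conv _ (fun t h => ⟨ne_of_lt (h.1.trans h.2), ne_of_lt h.1, ne_of_gt h.2⟩),
      conv _ (fun t h => ⟨ne_of_gt h.1, ne_of_lt h.2, ne_of_lt (h.1.trans h.2)⟩),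
      conv _ (fun t h => ⟨ne_of_lt h.2, ne_of_gt h.1, ne_of_gt (h.1.trans h.2)⟩),
      conv _ (fun t h => ⟨ne_of_gt (h.1.trans h.2), ne_of_gt h.2, ne_of_lt h.1⟩),
      conv _ (fun t h => ⟨ne_of_gt h.2, ne_of_gt (h.1.trans h.2), ne_of_gt h.1⟩)]
  have split : ∀ (s : Finset (Fin n × Fin n × Fin n)) (p : Fin n × Fin n × Fin n → Prop)
      [DecidablePred p],
      s.card = (s.filter p).card + (s.filter fun t => ¬ p t).card :=
    fun s p _ => (Finset.card_filter_add_card_filter_not p).symm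
  have congr_ : ∀ (p q : Fin n × Fin n × Fin n → Prop) [DecidablePred p] [DecidablePred q],
      (∀ t, (t.1 ≠ t.2.1 ∧ t.1 ≠ t.2.2 ∧ t.2.1 ≠ t.2.2) → (p t ↔ q t)) →
      (D3 n).filter p = (D3 n).filter q := by
    intro p q _ _ h
    exact Finset.filter_congr (fun t ht => h t (base t ht))
  rw [split (D3 n) (fun t => t.1 < t.2.1)]
  rw [split ((D3 n).filter fun t => t.1 < t.2.1) (fun t => t.2.1 < t.2.2)]
  rw [split (((D3 n).filter fun t => t.1 < t.2.1).filter fun t => ¬ t.2.1 < t.2.2)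
      (fun t => t.1 < t.2.2)]
  rw [split ((D3 n).filter fun t => ¬ t.1 < t.2.1) (fun t => t.1 < t.2.2)]
  rw [split (((D3 n).filter fun t => ¬ t.1 < t.2.1).filter fun t => ¬ t.1 < t.2.2)
      (fun t => t.2.1 < t.2.2)]
  simp only [Finset.filter_filter]
  have e1 : (D3 n).filter (fun t => t.1 < t.2.1 ∧ t.2.1 < t.2.2)
      = (D3 n).filter (fun t => t.1 < t.2.1 ∧ t.2.1 < t.2.2) := rfl
  have e2 : (D3 n).filter (fun t => (t.1 < t.2.1 ∧ ¬ t.2.1 < t.2.2) ∧ t.1 < t.2.2)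
      = (D3 n).filter (fun t => t.1 < t.2.2 ∧ t.2.2 < t.2.1) := by
    apply congr_
    rintro t ⟨h1, h2, h3⟩
    rw [not_lt_iff_of_ne h3]
    exact ⟨fun h => ⟨h.2, h.1.2⟩, fun h => ⟨⟨h.1.trans h.2, h.2⟩, h.1⟩⟩
  have e4 : (D3 n).filter (fun t => (t.1 < t.2.1 ∧ ¬ t.2.1 < t.2.2) ∧ ¬ t.1 < t.2.2)
      = (D3 n).filter (fun t => t.2.2 < t.1 ∧ t.1 < t.2.1) := by
    apply congr_
    rintro t ⟨h1, h2, h3⟩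
    rw [not_lt_iff_of_ne h3, not_lt_iff_of_ne h2]
    exact ⟨fun h => ⟨h.2, h.1.1⟩, fun h => ⟨⟨h.2, h.1.trans h.2⟩, h.1⟩⟩
  have e3 : (D3 n).filter (fun t => ¬ t.1 < t.2.1 ∧ t.1 < t.2.2)
      = (D3 n).filter (fun t => t.2.1 < t.1 ∧ t.1 < t.2.2) := by
    apply congr_
    rintro t ⟨h1, h2, h3⟩
    rw [not_lt_iff_of_ne h1]
  have e5 : (D3 n).filter (fun t => (¬ t.1 < t.2.1 ∧ ¬ t.1 < t.2.2) ∧ t.2.1 < t.2.2)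
      = (D3 n).filter (fun t => t.2.1 < t.2.2 ∧ t.2.2 < t.1) := by
    apply congr_
    rintro t ⟨h1, h2, h3⟩
    rw [not_lt_iff_of_ne h1, not_lt_iff_of_ne h2]
    exact ⟨fun h => ⟨h.2, h.1.2⟩, fun h => ⟨⟨h.1.trans h.2, h.2⟩, h.1⟩⟩
  have e6 : (D3 n).filter (fun t => (¬ t.1 < t.2.1 ∧ ¬ t.1 < t.2.2) ∧ ¬ t.2.1 < t.2.2)
      = (D3 n).filter (fun t => t.2.2 < t.2.1 ∧ t.2.1 < t.1) := by
    apply congr_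
    rintro t ⟨h1, h2, h3⟩
    rw [not_lt_iff_of_ne h1, not_lt_iff_of_ne h2, not_lt_iff_of_ne h3]
    exact ⟨fun h => ⟨h.2, h.1.1⟩, fun h => ⟨⟨h.2, h.1.trans h.2⟩, h.1⟩⟩
  rw [e2, e4, e3, e5, e6]
  omega

lemma six_mul_S3 : 6 * (S3 n).card = (D3 n).card := by
  have h := D3_card_split (n := n)
  have h1 : (univ.filter fun t : Fin n × Fin n × Fin n => t.1 < t.2.1 ∧ t.2.1 < t.2.2).card
      = (S3 n).card := rfl
  rw [h1, cls2_card, cls3_card, cls4_card, cls5_card, cls6_card] at h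
  omega

lemma D2_card_split : (D2 n).card
    = (univ.filter fun t : Fin n × Fin n => t.1 < t.2).card
    + (univ.filter fun t : Fin n × Fin n => t.2 < t.1).card := by
  classical
  have conv : ∀ (p : Fin n × Fin n → Prop) [DecidablePred p],
      (∀ t, p t → t.1 ≠ t.2) → (univ.filter p) = (D2 n).filter p := by
    intro p _ hp
    ext t
    simp only [mem_filter, mem_univ, true_and, D2]
    exact ⟨fun h => ⟨hp t h, h⟩, fun h => h.2⟩
  rw [conv _ (fun t h => ne_of_lt h), conv _ (fun t h => ne_of_gt h)]
  rw [← Finset.card_filter_add_card_filter_not (s := D2 n) (fun t => t.1 < t.2)]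
  have hh : (D2 n).filter (fun t => ¬ t.1 < t.2) = (D2 n).filter (fun t => t.2 < t.1) := by
    apply Finset.filter_congr
    intro t ht
    have h12 : t.1 ≠ t.2 := by simpa [D2] using ht
    rw [not_lt_iff_of_ne h12]
  rw [hh]

lemma pair_lt_card : 2 * (univ.filter fun t : Fin n × Fin n => t.1 < t.2).card = (D2 n).card := by
  have h := D2_card_split (n := n)
  have : (univ.filter fun t : Fin n × Fin n => t.2 < t.1).card
      = (univ.filter fun t : Fin n × Fin n => t.1 < t.2).card :=
    card_filter_equiv ⟨fun t => (t.2, t.1), fun t => (t.2, t.1), fun t => rfl, fun t => rfl⟩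
      (fun t => t.1 < t.2)
  omega

lemma pair_gt_card : 2 * (univ.filter fun t : Fin n × Fin n => t.2 < t.1).card = (D2 n).card := by
  have h := D2_card_split (n := n)
  have : (univ.filter fun t : Fin n × Fin n => t.2 < t.1).card
      = (univ.filter fun t : Fin n × Fin n => t.1 < t.2).card :=
    card_filter_equiv ⟨fun t => (t.2, t.1), fun t => (t.2, t.1), fun t => rfl, fun t => rfl⟩
      (fun t => t.1 < t.2)
  omega


lemma orbit_two {ω : Equiv.Perm (Fin n)} {j : Fin n} (h2 : ω (ω j) = j) :
    ∀ m : ℕ, (ω ^ m) j = j ∨ (ω ^ m) j = ω j := by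
  intro m
  induction m with
  | zero => left; rfl
  | succ k ih =>
    rw [pow_succ', Equiv.Perm.mul_apply]
    rcases ih with h | h
    · right; rw [h]
    · left; rw [h, h2]

lemma support_cycleOf_pair {ω : Equiv.Perm (Fin n)} {j : Fin n} (h1 : ω j ≠ j)
    (h2 : ω (ω j) = j) : (ω.cycleOf j).support = {j, ω j} := by
  ext k
  rw [Equiv.Perm.mem_support_cycleOf_iff]
  constructor
  · rintro ⟨hsc, -⟩
    obtain ⟨m, -, hm⟩ := Equiv.Perm.SameCycle.exists_pow_eq' hsc
    rcases orbit_two h2 m with h | h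
    · rw [hm] at h; subst h; exact Finset.mem_insert_self _ _
    · rw [hm] at h; subst h; exact Finset.mem_insert_of_mem (Finset.mem_singleton_self _)
  · intro hk
    rcases Finset.mem_insert.1 hk with h | h
    · subst h; exact ⟨Equiv.Perm.SameCycle.refl _ _, Equiv.Perm.mem_support.2 h1⟩
    · rw [Finset.mem_singleton] at h; subst h
      exact ⟨⟨1, by simp⟩, Equiv.Perm.mem_support.2 h1⟩

lemma card_two_cycle_points (ω : Equiv.Perm (Fin n)) :
    (univ.filter fun j => ω j ≠ j ∧ ω (ω j) = j).card = 2 * Multiset.count 2 ω.cycleType := by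
  classical
  set F := ω.cycleFactorsFinset.filter (fun c => c.support.card = 2) with hF
  have hcount : Multiset.count 2 ω.cycleType = F.card := by
    rw [Equiv.Perm.cycleType_def, Multiset.count_map]
    have hFc : F.card = Multiset.card
        (Multiset.filter (fun c => c.support.card = 2) ω.cycleFactorsFinset.val) := rfl
    rw [hFc]
    exact congrArg Multiset.card
      (Multiset.filter_congr (fun c _ => by simp [Function.comp, eq_comm]))
  have hset : (univ.filter fun j => ω j ≠ j ∧ ω (ω j) = j) = F.biUnion (fun c => c.support) := by
    ext j
    simp only [mem_filter, mem_univ, true_and, Finset.mem_biUnion, hF]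
    constructor
    · rintro ⟨h1, h2⟩
      refine ⟨ω.cycleOf j, ⟨Equiv.Perm.cycleOf_mem_cycleFactorsFinset_iff.2
        (Equiv.Perm.mem_support.2 h1), ?_⟩, ?_⟩
      · rw [support_cycleOf_pair h1 h2]
        rw [Finset.card_insert_of_notMem (by simp [Ne.symm h1]), Finset.card_singleton]
      · rw [support_cycleOf_pair h1 h2]; exact Finset.mem_insert_self _ _
    · rintro ⟨c, hc, hj⟩
      obtain ⟨hcf, hcard⟩ := hc
      obtain ⟨hcyc, happ⟩ := Equiv.Perm.mem_cycleFactorsFinset_iff.1 hcf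
      have hcj : c j = ω j := happ j hj
      have h1 : ω j ≠ j := by rw [← hcj]; exact Equiv.Perm.mem_support.1 hj
      have hcjj : c j ≠ j := by rw [hcj]; exact h1
      have hsub : {j, c j} ⊆ c.support := by
        intro k hk
        rcases Finset.mem_insert.1 hk with h | h
        · subst h; exact hj
        · rw [Finset.mem_singleton] at h; subst h
          exact Equiv.Perm.apply_mem_support.2 hj
      have hcard2 : ({j, c j} : Finset (Fin n)).card = 2 := by
        rw [Finset.card_insert_of_notMem (by simp [Ne.symm hcjj]), Finset.card_singleton]
      have hseq : c.support = {j, c j} :=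
        (Finset.eq_of_subset_of_card_le hsub (by rw [hcard2, hcard])).symm
      have hccj : c (c j) ∈ c.support := Equiv.Perm.apply_mem_support.2 (hsub (by simp))
      have hccj' : c (c j) ≠ c j := Equiv.Perm.mem_support.1 (hsub (by simp))
      have : c (c j) = j := by
        rw [hseq] at hccj
        rcases Finset.mem_insert.1 hccj with h | h
        · exact h
        · rw [Finset.mem_singleton] at h; exact absurd h hccj'
      refine ⟨h1, ?_⟩
      rw [← hcj, ← happ (c j) (hsub (by simp)), this]
  rw [hset, hcount]
  rw [Finset.card_biUnion]
  · rw [Finset.sum_congr rfl (fun c hc => (Finset.mem_filter.1 hc).2), Finset.sum_const,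
      smul_eq_mul, mul_comm]
  · intro c1 h1 c2 h2 hne
    have := ω.cycleFactorsFinset_pairwise_disjoint (Finset.mem_coe.2 (Finset.mem_filter.1 h1).1)
      (Finset.mem_coe.2 (Finset.mem_filter.1 h2).1) hne
    exact this.disjoint_support

lemma card_split_support (ω : Equiv.Perm (Fin n)) :
    (univ.filter fun j => ω j ≠ j ∧ ω (ω j) ≠ j).card
      + (univ.filter fun j => ω j ≠ j ∧ ω (ω j) = j).card = ω.support.card := by
  classical
  have hs : ω.support = univ.filter fun j => ω j ≠ j := rfl
  rw [hs, ← Finset.card_filter_add_card_filter_not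
    (s := univ.filter fun j => ω j ≠ j) (fun j => ω (ω j) = j), Finset.filter_filter,
    Finset.filter_filter]
  rw [add_comm]


lemma mem_conjClass {lam : n.Partition} {ω : Equiv.Perm (Fin n)} :
    ω ∈ conjClass n lam ↔ ω.cycleType = Multiset.filter (fun i => i ≠ 1) lam.parts := by
  simp [conjClass]

lemma conjClass_conj {lam : n.Partition} (σ ω : Equiv.Perm (Fin n))
    (h : ω ∈ conjClass n lam) : σ * ω * σ⁻¹ ∈ conjClass n lam := by
  rw [mem_conjClass] at h ⊢
  rw [Equiv.Perm.cycleType_conj]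
  exact h

lemma parts_filter_sum (lam : n.Partition) :
    (Multiset.filter (fun i => i ≠ 1) lam.parts).sum + Multiset.count 1 lam.parts = n := by
  have hfil := Multiset.filter_add_not (fun i => i ≠ 1) lam.parts
  have hsum : (Multiset.filter (fun i => i ≠ 1) lam.parts).sum
      + (Multiset.filter (fun i => ¬ i ≠ 1) lam.parts).sum = n := by
    rw [← Multiset.sum_add, hfil, lam.parts_sum]
  have heq : Multiset.filter (fun i => ¬ i ≠ 1) lam.parts
      = Multiset.filter (fun i => i = 1) lam.parts :=
    Multiset.filter_congr (fun x _ => not_not)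
  rw [heq, Multiset.filter_eq', Multiset.sum_replicate, smul_eq_mul, mul_one] at hsum
  exact hsum

lemma conjClass_nonempty (lam : n.Partition) : (conjClass n lam).Nonempty := by
  have h1 : (Multiset.filter (fun i => i ≠ 1) lam.parts).sum ≤ Fintype.card (Fin n) := by
    rw [Fintype.card_fin]
    have := parts_filter_sum lam
    omega
  have h2 : ∀ a ∈ Multiset.filter (fun i => i ≠ 1) lam.parts, 2 ≤ a := by
    intro a ha
    obtain ⟨hmem, hne⟩ := Multiset.mem_filter.1 ha
    have := lam.parts_pos hmem
    omega
  obtain ⟨g, hg⟩ := (Equiv.Perm.exists_with_cycleType_iff (Fin n)).2 ⟨h1, h2⟩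
  exact ⟨g, mem_conjClass.2 hg⟩

lemma conjClass_s2 {lam : n.Partition} {ω : Equiv.Perm (Fin n)} (h : ω ∈ conjClass n lam) :
    (univ.filter fun j => ω j ≠ j ∧ ω (ω j) = j).card = 2 * Multiset.count 2 lam.parts := by
  rw [card_two_cycle_points, mem_conjClass.1 h, Multiset.count_filter, if_pos (by decide)]

lemma conjClass_s3 {lam : n.Partition} {ω : Equiv.Perm (Fin n)} (h : ω ∈ conjClass n lam) :
    (univ.filter fun j => ω j ≠ j ∧ ω (ω j) ≠ j).card + 2 * Multiset.count 2 lam.parts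
      + Multiset.count 1 lam.parts = n := by
  have h1 := card_split_support ω
  rw [conjClass_s2 h] at h1
  have h2 : ω.support.card = (Multiset.filter (fun i => i ≠ 1) lam.parts).sum := by
    rw [← Equiv.Perm.sum_cycleType, mem_conjClass.1 h]
  have h3 := parts_filter_sum lam
  omega


lemma conj_filter_card (C : Finset (Equiv.Perm (Fin n)))
    (hC : ∀ (σ ω : Equiv.Perm (Fin n)), ω ∈ C → σ * ω * σ⁻¹ ∈ C)
    (P : Equiv.Perm (Fin n) → Prop) [DecidablePred P] (σ : Equiv.Perm (Fin n)) :
    (C.filter fun ω => P (σ * ω * σ⁻¹)).card = (C.filter P).card := by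
  refine Finset.card_bij' (fun ω _ => σ * ω * σ⁻¹) (fun ω _ => σ⁻¹ * ω * σ) ?_ ?_ ?_ ?_
  · intro ω hω
    obtain ⟨h1, h2⟩ := Finset.mem_filter.1 hω
    exact Finset.mem_filter.2 ⟨hC σ ω h1, h2⟩
  · intro ω hω
    obtain ⟨h1, h2⟩ := Finset.mem_filter.1 hω
    refine Finset.mem_filter.2 ⟨by simpa using hC σ⁻¹ ω h1, ?_⟩
    have : σ * (σ⁻¹ * ω * σ) * σ⁻¹ = ω := by group
    rwa [this]
  · intro ω _; group
  · intro ω _; group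

lemma swap_sum (C : Finset (Equiv.Perm (Fin n))) (P : Equiv.Perm (Fin n) → Prop)
    [DecidablePred P] :
    ∑ σ : Equiv.Perm (Fin n), (C.filter fun ω => P (σ * ω * σ⁻¹)).card
      = ∑ ω ∈ C, (univ.filter fun σ : Equiv.Perm (Fin n) => P (σ * ω * σ⁻¹)).card := by
  simp_rw [Finset.card_filter]
  exact Finset.sum_comm

/-- Main triple lemma -/
lemma L3 (C : Finset (Equiv.Perm (Fin n)))
    (hC : ∀ (σ ω : Equiv.Perm (Fin n)), ω ∈ C → σ * ω * σ⁻¹ ∈ C)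
    (m : ℕ) (hm : ∀ ω ∈ C, (univ.filter fun j => ω j ≠ j ∧ ω (ω j) ≠ j).card = m)
    (i : Fin n) (A B : Fin n → Prop) [DecidablePred A] [DecidablePred B]
    (hA : ∀ a, A a → a ≠ i) (hB : ∀ b, B b → b ≠ i) :
    (D3 n).card * ((univ : Finset (Equiv.Perm (Fin n))).card
        * (C.filter fun ω => A (ω⁻¹ i) ∧ B (ω i) ∧ ω⁻¹ i ≠ ω i).card)
      = (univ : Finset (Equiv.Perm (Fin n))).card
        * ((univ.filter fun p : Fin n × Fin n => A p.1 ∧ B p.2 ∧ p.1 ≠ p.2).card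
            * (m * C.card)) := by
  classical
  set P : Equiv.Perm (Fin n) → Prop := fun ω => A (ω⁻¹ i) ∧ B (ω i) ∧ ω⁻¹ i ≠ ω i with hP
  set PAB : Finset (Fin n × Fin n) :=
    univ.filter fun p : Fin n × Fin n => A p.1 ∧ B p.2 ∧ p.1 ≠ p.2 with hPAB
  have key : ∀ ω ∈ C, (D3 n).card *
      (univ.filter fun σ : Equiv.Perm (Fin n) => P (σ * ω * σ⁻¹)).card
      = m * (PAB.card * (univ : Finset (Equiv.Perm (Fin n))).card) := by
    intro ω hω
    -- expand P of a conjugate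
    have hPconj : ∀ σ : Equiv.Perm (Fin n), P (σ * ω * σ⁻¹) ↔
        (A (σ (ω⁻¹ (σ⁻¹ i))) ∧ B (σ (ω (σ⁻¹ i))) ∧ σ (ω⁻¹ (σ⁻¹ i)) ≠ σ (ω (σ⁻¹ i))) := by
      intro σ
      have e1 : (σ * ω * σ⁻¹)⁻¹ i = σ (ω⁻¹ (σ⁻¹ i)) := by
        simp [mul_assoc, Equiv.Perm.mul_apply]
      have e2 : (σ * ω * σ⁻¹) i = σ (ω (σ⁻¹ i)) := by
        simp [mul_assoc, Equiv.Perm.mul_apply]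
      simp only [hP, e1, e2]
    have hfib : (univ.filter fun σ : Equiv.Perm (Fin n) => P (σ * ω * σ⁻¹)).card
        = ∑ j : Fin n, ((univ.filter fun σ : Equiv.Perm (Fin n) => P (σ * ω * σ⁻¹)).filter
            fun σ => σ⁻¹ i = j).card :=
      Finset.card_eq_sum_card_fiberwise (fun σ _ => mem_univ _)
    have hterm : ∀ j : Fin n, (D3 n).card *
        ((univ.filter fun σ : Equiv.Perm (Fin n) => P (σ * ω * σ⁻¹)).filter
            fun σ => σ⁻¹ i = j).card
        = if (ω j ≠ j ∧ ω (ω j) ≠ j) then PAB.card *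
            (univ : Finset (Equiv.Perm (Fin n))).card else 0 := by
      intro j
      by_cases hj1 : ω j = j
      · rw [if_neg (by simp [hj1])]
        have : ((univ.filter fun σ : Equiv.Perm (Fin n) => P (σ * ω * σ⁻¹)).filter
            fun σ => σ⁻¹ i = j) = ∅ := by
          rw [Finset.filter_eq_empty_iff]
          rintro σ hσ hinv
          obtain ⟨hA', -, -⟩ := (hPconj σ).1 (Finset.mem_filter.1 hσ).2
          rw [hinv] at hA'
          have hwj : ω⁻¹ j = j := by
            conv_lhs => rw [← hj1]
            exact ω.symm_apply_apply j
          rw [hwj] at hA'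
          have : σ j = i := by rw [← hinv]; exact σ.apply_symm_apply i
          rw [this] at hA'
          exact hA i hA' rfl
        rw [this]; simp
      by_cases hj2 : ω (ω j) = j
      · rw [if_neg (by simp [hj2])]
        have : ((univ.filter fun σ : Equiv.Perm (Fin n) => P (σ * ω * σ⁻¹)).filter
            fun σ => σ⁻¹ i = j) = ∅ := by
          rw [Finset.filter_eq_empty_iff]
          rintro σ hσ hinv
          obtain ⟨-, -, hne⟩ := (hPconj σ).1 (Finset.mem_filter.1 hσ).2
          rw [hinv] at hne
          have hwj : ω⁻¹ j = ω j := by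
            conv_lhs => rw [← hj2]
            exact ω.symm_apply_apply (ω j)
          rw [hwj] at hne
          exact hne rfl
        rw [this]; simp
      · rw [if_pos ⟨hj1, hj2⟩]
        set x := ω⁻¹ j with hx
        set y := ω j with hy
        have hxj : x ≠ j := by
          intro h
          apply hj1
          have h2 : ω x = j := ω.apply_symm_apply j
          rw [h] at h2
          exact h2
        have hyj : y ≠ j := hj1
        have hjx : j ≠ x := hxj.symm
        have hjy : j ≠ y := hyj.symm
        have hxy : x ≠ y := by
          intro h
          apply hj2
          have h2 : ω x = j := ω.apply_symm_apply j
          rw [h] at h2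
          exact h2
        -- the fiber equals a sum of cnt3's
        have hfib2 : ((univ.filter fun σ : Equiv.Perm (Fin n) => P (σ * ω * σ⁻¹)).filter
              fun σ => σ⁻¹ i = j).card
            = ∑ p ∈ PAB, cnt3 n j x y i p.1 p.2 := by
          rw [Finset.card_eq_sum_card_fiberwise
            (f := fun σ : Equiv.Perm (Fin n) => (σ x, σ y)) (t := PAB) ?_]
          · refine Finset.sum_congr rfl fun p hp => ?_
            obtain ⟨hpA, hpB, hpne⟩ : A p.1 ∧ B p.2 ∧ p.1 ≠ p.2 := by
              simpa [hPAB] using hp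
            congr 1
            ext σ
            simp only [Finset.mem_filter, mem_univ, true_and, cnt3]
            constructor
            · rintro ⟨⟨hPc, hinv⟩, hpair⟩
              have hσj : σ j = i := by rw [← hinv]; exact σ.apply_symm_apply i
              rw [Prod.ext_iff] at hpair
              exact ⟨hσj, hpair.1, hpair.2⟩
            · rintro ⟨hσj, hσx, hσy⟩
              have hinv : σ⁻¹ i = j := by rw [← hσj]; exact σ.symm_apply_apply j
              refine ⟨⟨(hPconj σ).2 ?_, hinv⟩, by rw [hσx, hσy]⟩
              rw [hinv, ← hx, ← hy, hσx, hσy]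
              exact ⟨hpA, hpB, hpne⟩
          · intro σ hσ
            obtain ⟨hPc, hinv⟩ := Finset.mem_filter.1 hσ
            have hPc' := (hPconj σ).1 (Finset.mem_filter.1 hPc).2
            rw [hinv, ← hx, ← hy] at hPc'
            simp only [hPAB, Finset.mem_coe, Finset.mem_filter, mem_univ, true_and]
            exact ⟨hPc'.1, hPc'.2.1, fun h => hPc'.2.2 (by rw [h])⟩
        rw [hfib2, Finset.mul_sum]
        rw [Finset.sum_congr rfl (fun p hp => ?_), Finset.sum_const, smul_eq_mul]
        obtain ⟨hpA, hpB, hpne⟩ : A p.1 ∧ B p.2 ∧ p.1 ≠ p.2 := by simpa [hPAB] using hp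
        exact cnt3_mul hjx hjy hxy (fun h => hA p.1 hpA h.symm)
          (fun h => hB p.2 hpB h.symm) hpne
    calc (D3 n).card * (univ.filter fun σ : Equiv.Perm (Fin n) => P (σ * ω * σ⁻¹)).card
        = ∑ j : Fin n, (D3 n).card * ((univ.filter fun σ : Equiv.Perm (Fin n) =>
            P (σ * ω * σ⁻¹)).filter fun σ => σ⁻¹ i = j).card := by
          rw [hfib, Finset.mul_sum]
      _ = ∑ j : Fin n, if (ω j ≠ j ∧ ω (ω j) ≠ j) then PAB.card *
            (univ : Finset (Equiv.Perm (Fin n))).card else 0 :=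
          Finset.sum_congr rfl fun j _ => hterm j
      _ = (univ.filter fun j : Fin n => ω j ≠ j ∧ ω (ω j) ≠ j).card
            * (PAB.card * (univ : Finset (Equiv.Perm (Fin n))).card) := by
          rw [← Finset.sum_filter, Finset.sum_const, smul_eq_mul]
      _ = m * (PAB.card * (univ : Finset (Equiv.Perm (Fin n))).card) := by rw [hm ω hω]
  -- assemble
  have step1 : (univ : Finset (Equiv.Perm (Fin n))).card * (C.filter P).card
      = ∑ ω ∈ C, (univ.filter fun σ : Equiv.Perm (Fin n) => P (σ * ω * σ⁻¹)).card := by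
    have h := swap_sum (n := n) C P
    rw [Finset.sum_congr rfl (fun σ _ => conj_filter_card C hC P σ), Finset.sum_const,
      smul_eq_mul] at h
    exact h
  calc (D3 n).card * ((univ : Finset (Equiv.Perm (Fin n))).card * (C.filter P).card)
      = ∑ ω ∈ C, (D3 n).card *
          (univ.filter fun σ : Equiv.Perm (Fin n) => P (σ * ω * σ⁻¹)).card := by
        rw [step1, Finset.mul_sum]
    _ = ∑ ω ∈ C, m * (PAB.card * (univ : Finset (Equiv.Perm (Fin n))).card) :=
        Finset.sum_congr rfl key
    _ = C.card * (m * (PAB.card * (univ : Finset (Equiv.Perm (Fin n))).card)) := by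
        rw [Finset.sum_const, smul_eq_mul]
    _ = (univ : Finset (Equiv.Perm (Fin n))).card * (PAB.card * (m * C.card)) := by ring

/-- Main pair lemma (2-cycle case) -/
lemma L2 (C : Finset (Equiv.Perm (Fin n)))
    (hC : ∀ (σ ω : Equiv.Perm (Fin n)), ω ∈ C → σ * ω * σ⁻¹ ∈ C)
    (m2 : ℕ) (hm2 : ∀ ω ∈ C, (univ.filter fun j => ω j ≠ j ∧ ω (ω j) = j).card = m2)
    (i : Fin n) (B : Fin n → Prop) [DecidablePred B]
    (hB : ∀ b, B b → b ≠ i) :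
    (D2 n).card * ((univ : Finset (Equiv.Perm (Fin n))).card
        * (C.filter fun ω => B (ω i) ∧ ω⁻¹ i = ω i).card)
      = (univ : Finset (Equiv.Perm (Fin n))).card
        * ((univ.filter B).card * (m2 * C.card)) := by
  classical
  set P : Equiv.Perm (Fin n) → Prop := fun ω => B (ω i) ∧ ω⁻¹ i = ω i with hP
  set QB : Finset (Fin n) := univ.filter B with hQB
  have key : ∀ ω ∈ C, (D2 n).card *
      (univ.filter fun σ : Equiv.Perm (Fin n) => P (σ * ω * σ⁻¹)).card
      = m2 * (QB.card * (univ : Finset (Equiv.Perm (Fin n))).card) := by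
    intro ω hω
    have hPconj : ∀ σ : Equiv.Perm (Fin n), P (σ * ω * σ⁻¹) ↔
        (B (σ (ω (σ⁻¹ i))) ∧ σ (ω⁻¹ (σ⁻¹ i)) = σ (ω (σ⁻¹ i))) := by
      intro σ
      have e1 : (σ * ω * σ⁻¹)⁻¹ i = σ (ω⁻¹ (σ⁻¹ i)) := by
        simp [mul_assoc, Equiv.Perm.mul_apply]
      have e2 : (σ * ω * σ⁻¹) i = σ (ω (σ⁻¹ i)) := by
        simp [mul_assoc, Equiv.Perm.mul_apply]
      simp only [hP, e1, e2]
    have hfib : (univ.filter fun σ : Equiv.Perm (Fin n) => P (σ * ω * σ⁻¹)).card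
        = ∑ j : Fin n, ((univ.filter fun σ : Equiv.Perm (Fin n) => P (σ * ω * σ⁻¹)).filter
            fun σ => σ⁻¹ i = j).card :=
      Finset.card_eq_sum_card_fiberwise (fun σ _ => mem_univ _)
    have hterm : ∀ j : Fin n, (D2 n).card *
        ((univ.filter fun σ : Equiv.Perm (Fin n) => P (σ * ω * σ⁻¹)).filter
            fun σ => σ⁻¹ i = j).card
        = if (ω j ≠ j ∧ ω (ω j) = j) then QB.card *
            (univ : Finset (Equiv.Perm (Fin n))).card else 0 := by
      intro j
      by_cases hj1 : ω j = j
      · rw [if_neg (by simp [hj1])]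
        have : ((univ.filter fun σ : Equiv.Perm (Fin n) => P (σ * ω * σ⁻¹)).filter
            fun σ => σ⁻¹ i = j) = ∅ := by
          rw [Finset.filter_eq_empty_iff]
          rintro σ hσ hinv
          obtain ⟨hB', -⟩ := (hPconj σ).1 (Finset.mem_filter.1 hσ).2
          rw [hinv, hj1] at hB'
          have : σ j = i := by rw [← hinv]; exact σ.apply_symm_apply i
          rw [this] at hB'
          exact hB i hB' rfl
        rw [this]; simp
      by_cases hj2 : ω (ω j) = j
      · rw [if_pos ⟨hj1, hj2⟩]
        set y := ω j with hy
        have hyj : y ≠ j := hj1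
        have hjy : j ≠ y := hyj.symm
        have hinvy : ω⁻¹ j = y := by
          conv_lhs => rw [← hj2]
          exact ω.symm_apply_apply (ω j)
        have hfib2 : ((univ.filter fun σ : Equiv.Perm (Fin n) => P (σ * ω * σ⁻¹)).filter
              fun σ => σ⁻¹ i = j).card
            = ∑ b ∈ QB, cnt2 n j y i b := by
          rw [Finset.card_eq_sum_card_fiberwise
            (f := fun σ : Equiv.Perm (Fin n) => σ y) (t := QB) ?_]
          · refine Finset.sum_congr rfl fun b hb => ?_
            have hbB : B b := by simpa [hQB] using hb
            congr 1
            ext σ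
            simp only [Finset.mem_filter, mem_univ, true_and, cnt2]
            constructor
            · rintro ⟨⟨hPc, hinv⟩, hval⟩
              have hσj : σ j = i := by rw [← hinv]; exact σ.apply_symm_apply i
              exact ⟨hσj, hval⟩
            · rintro ⟨hσj, hσy⟩
              have hinv : σ⁻¹ i = j := by rw [← hσj]; exact σ.symm_apply_apply j
              refine ⟨⟨(hPconj σ).2 ?_, hinv⟩, hσy⟩
              rw [hinv, ← hy, hinvy, hσy]
              exact ⟨hbB, rfl⟩
          · intro σ hσ
            obtain ⟨hPc, hinv⟩ := Finset.mem_filter.1 hσ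
            have hPc' := (hPconj σ).1 (Finset.mem_filter.1 hPc).2
            rw [hinv, ← hy] at hPc'
            simp only [hQB, Finset.mem_coe, Finset.mem_filter, mem_univ, true_and]
            exact hPc'.1
        rw [hfib2, Finset.mul_sum]
        rw [Finset.sum_congr rfl (fun b hb => ?_), Finset.sum_const, smul_eq_mul]
        have hbB : B b := by simpa [hQB] using hb
        exact cnt2_mul hjy (fun h => hB b hbB h.symm)
      · rw [if_neg (by simp [hj2])]
        have : ((univ.filter fun σ : Equiv.Perm (Fin n) => P (σ * ω * σ⁻¹)).filter
            fun σ => σ⁻¹ i = j) = ∅ := by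
          rw [Finset.filter_eq_empty_iff]
          rintro σ hσ hinv
          obtain ⟨-, heq⟩ := (hPconj σ).1 (Finset.mem_filter.1 hσ).2
          rw [hinv] at heq
          have h3 : ω⁻¹ j = ω j := σ.injective heq
          apply hj2
          have h4 : ω (ω⁻¹ j) = ω (ω j) := by rw [h3]
          rw [show ω (ω⁻¹ j) = j from ω.apply_symm_apply j] at h4
          exact h4.symm
        rw [this]; simp
    calc (D2 n).card * (univ.filter fun σ : Equiv.Perm (Fin n) => P (σ * ω * σ⁻¹)).card
        = ∑ j : Fin n, (D2 n).card * ((univ.filter fun σ : Equiv.Perm (Fin n) =>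
            P (σ * ω * σ⁻¹)).filter fun σ => σ⁻¹ i = j).card := by
          rw [hfib, Finset.mul_sum]
      _ = ∑ j : Fin n, if (ω j ≠ j ∧ ω (ω j) = j) then QB.card *
            (univ : Finset (Equiv.Perm (Fin n))).card else 0 :=
          Finset.sum_congr rfl fun j _ => hterm j
      _ = (univ.filter fun j : Fin n => ω j ≠ j ∧ ω (ω j) = j).card
            * (QB.card * (univ : Finset (Equiv.Perm (Fin n))).card) := by
          rw [← Finset.sum_filter, Finset.sum_const, smul_eq_mul]
      _ = m2 * (QB.card * (univ : Finset (Equiv.Perm (Fin n))).card) := by rw [hm2 ω hω]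
  have step1 : (univ : Finset (Equiv.Perm (Fin n))).card * (C.filter P).card
      = ∑ ω ∈ C, (univ.filter fun σ : Equiv.Perm (Fin n) => P (σ * ω * σ⁻¹)).card := by
    have h := swap_sum (n := n) C P
    rw [Finset.sum_congr rfl (fun σ _ => conj_filter_card C hC P σ), Finset.sum_const,
      smul_eq_mul] at h
    exact h
  calc (D2 n).card * ((univ : Finset (Equiv.Perm (Fin n))).card * (C.filter P).card)
      = ∑ ω ∈ C, (D2 n).card *
          (univ.filter fun σ : Equiv.Perm (Fin n) => P (σ * ω * σ⁻¹)).card := by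
        rw [step1, Finset.mul_sum]
    _ = ∑ ω ∈ C, m2 * (QB.card * (univ : Finset (Equiv.Perm (Fin n))).card) :=
        Finset.sum_congr rfl key
    _ = C.card * (m2 * (QB.card * (univ : Finset (Equiv.Perm (Fin n))).card)) := by
        rw [Finset.sum_const, smul_eq_mul]
    _ = (univ : Finset (Equiv.Perm (Fin n))).card * (QB.card * (m2 * C.card)) := by ring


lemma triple_fiber (R : Fin n → Fin n → Fin n → Prop) [∀ i a b, Decidable (R i a b)] :
    (univ.filter fun t : Fin n × Fin n × Fin n => R t.1 t.2.1 t.2.2).card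
      = ∑ i : Fin n, (univ.filter fun p : Fin n × Fin n => R i p.1 p.2).card := by
  rw [Finset.card_eq_sum_card_fiberwise (f := fun t : Fin n × Fin n × Fin n => t.1)
    (t := univ) (fun _ _ => mem_univ _)]
  refine Finset.sum_congr rfl fun i _ => ?_
  refine Finset.card_bij' (fun t _ => (t.2.1, t.2.2)) (fun p _ => (i, p.1, p.2)) ?_ ?_ ?_ ?_
  · intro t ht
    simp only [mem_filter, mem_univ, true_and] at ht ⊢
    rw [← ht.2]; exact ht.1
  · intro p hp
    simp only [mem_filter, mem_univ, true_and] at hp ⊢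
    exact ⟨hp, trivial⟩
  · intro t ht
    simp only [mem_filter, mem_univ, true_and] at ht
    exact Prod.ext ht.2.symm rfl
  · intro p _; rfl

lemma pair_fiber (R : Fin n → Fin n → Prop) [∀ i b, Decidable (R i b)] :
    (univ.filter fun p : Fin n × Fin n => R p.1 p.2).card
      = ∑ i : Fin n, (univ.filter fun b : Fin n => R i b).card := by
  rw [Finset.card_eq_sum_card_fiberwise (f := fun p : Fin n × Fin n => p.1)
    (t := univ) (fun _ _ => mem_univ _)]
  refine Finset.sum_congr rfl fun i _ => ?_
  refine Finset.card_bij' (fun p _ => p.2) (fun b _ => (i, b)) ?_ ?_ ?_ ?_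
  · intro p hp
    simp only [mem_filter, mem_univ, true_and] at hp ⊢
    rw [← hp.2]; exact hp.1
  · intro b hb
    simp only [mem_filter, mem_univ, true_and] at hb ⊢
    exact ⟨hb, trivial⟩
  · intro p hp
    simp only [mem_filter, mem_univ, true_and] at hp
    exact Prod.ext hp.2.symm rfl
  · intro b _; rfl

lemma D3_pos (hn : 3 ≤ n) : 0 < (D3 n).card := by
  refine Finset.card_pos.2 ⟨(⟨0, by omega⟩, ⟨1, by omega⟩, ⟨2, by omega⟩), ?_⟩
  simp [D3, Fin.ext_iff]

lemma D2_pos (hn : 3 ≤ n) : 0 < (D2 n).card := by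
  refine Finset.card_pos.2 ⟨(⟨0, by omega⟩, ⟨1, by omega⟩), ?_⟩
  simp [D2, Fin.ext_iff]

lemma perm_pos : 0 < (univ : Finset (Equiv.Perm (Fin n))).card :=
  Finset.card_pos.2 ⟨1, mem_univ 1⟩

lemma key_cda (hn : 3 ≤ n) (C : Finset (Equiv.Perm (Fin n)))
    (hC : ∀ (σ ω : Equiv.Perm (Fin n)), ω ∈ C → σ * ω * σ⁻¹ ∈ C) (M : ℕ)
    (hm : ∀ ω ∈ C, (univ.filter fun j => ω j ≠ j ∧ ω (ω j) ≠ j).card = M) :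
    6 * (∑ ω ∈ C, cda ω) = M * C.card := by
  classical
  set perm := (univ : Finset (Equiv.Perm (Fin n))).card with hpm
  have hswap : ∑ ω ∈ C, cda ω
      = ∑ i : Fin n, (C.filter fun ω => ω⁻¹ i < i ∧ i < ω i).card := by
    simp_rw [cda, Finset.card_filter]
    exact Finset.sum_comm
  have hL : ∀ i : Fin n, (D3 n).card * (perm
      * (C.filter fun ω => ω⁻¹ i < i ∧ i < ω i).card)
      = perm * ((univ.filter fun p : Fin n × Fin n => p.1 < i ∧ i < p.2).card
          * (M * C.card)) := by
    intro i
    have h0 := L3 C hC M hm i (fun a => a < i) (fun b => i < b)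
      (fun a h => ne_of_lt h) (fun b h => ne_of_gt h)
    have hc1 : (C.filter fun ω => ω⁻¹ i < i ∧ i < ω i ∧ ω⁻¹ i ≠ ω i)
        = C.filter fun ω => ω⁻¹ i < i ∧ i < ω i := by
      apply Finset.filter_congr; intro ω _
      exact ⟨fun h => ⟨h.1, h.2.1⟩, fun h => ⟨h.1, h.2, ne_of_lt (h.1.trans h.2)⟩⟩
    have hc2 : (univ.filter fun p : Fin n × Fin n => p.1 < i ∧ i < p.2 ∧ p.1 ≠ p.2)
        = univ.filter fun p : Fin n × Fin n => p.1 < i ∧ i < p.2 := by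
      apply Finset.filter_congr; intro p _
      exact ⟨fun h => ⟨h.1, h.2.1⟩, fun h => ⟨h.1, h.2, ne_of_lt (h.1.trans h.2)⟩⟩
    rw [hc1, hc2] at h0
    exact h0
  have hsum : (D3 n).card * (perm * ∑ i : Fin n,
        (C.filter fun ω => ω⁻¹ i < i ∧ i < ω i).card)
      = perm * ((∑ i : Fin n,
          (univ.filter fun p : Fin n × Fin n => p.1 < i ∧ i < p.2).card) * (M * C.card)) := by
    calc (D3 n).card * (perm * ∑ i : Fin n,
          (C.filter fun ω => ω⁻¹ i < i ∧ i < ω i).card)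
        = ∑ i : Fin n, (D3 n).card
            * (perm * (C.filter fun ω => ω⁻¹ i < i ∧ i < ω i).card) := by
          rw [Finset.mul_sum, Finset.mul_sum]
      _ = ∑ i : Fin n, perm * ((univ.filter fun p : Fin n × Fin n =>
            p.1 < i ∧ i < p.2).card * (M * C.card)) := Finset.sum_congr rfl fun i _ => hL i
      _ = perm * ((∑ i : Fin n, (univ.filter fun p : Fin n × Fin n =>
            p.1 < i ∧ i < p.2).card) * (M * C.card)) := by
          rw [Finset.sum_mul, Finset.mul_sum]
  have htrip : (∑ i : Fin n,
        (univ.filter fun p : Fin n × Fin n => p.1 < i ∧ i < p.2).card) = (S3 n).card := by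
    rw [← triple_fiber (fun i a b => a < i ∧ i < b)]
    exact cls3_card
  have hmain : (D3 n).card * (perm * (6 * ∑ ω ∈ C, cda ω))
      = (D3 n).card * (perm * (M * C.card)) := by
    calc (D3 n).card * (perm * (6 * ∑ ω ∈ C, cda ω))
        = 6 * ((D3 n).card * (perm * ∑ i : Fin n,
            (C.filter fun ω => ω⁻¹ i < i ∧ i < ω i).card)) := by rw [hswap]; ring
      _ = 6 * (perm * ((S3 n).card * (M * C.card))) := by rw [hsum, htrip]
      _ = perm * ((6 * (S3 n).card) * (M * C.card)) := by ring
      _ = perm * ((D3 n).card * (M * C.card)) := by rw [six_mul_S3]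
      _ = (D3 n).card * (perm * (M * C.card)) := by ring
  have h1 := Nat.eq_of_mul_eq_mul_left (D3_pos hn) hmain
  exact Nat.eq_of_mul_eq_mul_left perm_pos h1

lemma key_cdd (hn : 3 ≤ n) (C : Finset (Equiv.Perm (Fin n)))
    (hC : ∀ (σ ω : Equiv.Perm (Fin n)), ω ∈ C → σ * ω * σ⁻¹ ∈ C) (M : ℕ)
    (hm : ∀ ω ∈ C, (univ.filter fun j => ω j ≠ j ∧ ω (ω j) ≠ j).card = M) :
    6 * (∑ ω ∈ C, cdd ω) = M * C.card := by
  classical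
  set perm := (univ : Finset (Equiv.Perm (Fin n))).card with hpm
  have hswap : ∑ ω ∈ C, cdd ω
      = ∑ i : Fin n, (C.filter fun ω => i < ω⁻¹ i ∧ ω i < i).card := by
    simp_rw [cdd, Finset.card_filter]
    exact Finset.sum_comm
  have hL : ∀ i : Fin n, (D3 n).card * (perm
      * (C.filter fun ω => i < ω⁻¹ i ∧ ω i < i).card)
      = perm * ((univ.filter fun p : Fin n × Fin n => i < p.1 ∧ p.2 < i).card
          * (M * C.card)) := by
    intro i
    have h0 := L3 C hC M hm i (fun a => i < a) (fun b => b < i)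
      (fun a h => ne_of_gt h) (fun b h => ne_of_lt h)
    have hc1 : (C.filter fun ω => i < ω⁻¹ i ∧ ω i < i ∧ ω⁻¹ i ≠ ω i)
        = C.filter fun ω => i < ω⁻¹ i ∧ ω i < i := by
      apply Finset.filter_congr; intro ω _
      exact ⟨fun h => ⟨h.1, h.2.1⟩, fun h => ⟨h.1, h.2, ne_of_gt (h.2.trans h.1)⟩⟩
    have hc2 : (univ.filter fun p : Fin n × Fin n => i < p.1 ∧ p.2 < i ∧ p.1 ≠ p.2)
        = univ.filter fun p : Fin n × Fin n => i < p.1 ∧ p.2 < i := by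
      apply Finset.filter_congr; intro p _
      exact ⟨fun h => ⟨h.1, h.2.1⟩, fun h => ⟨h.1, h.2, ne_of_gt (h.2.trans h.1)⟩⟩
    rw [hc1, hc2] at h0
    exact h0
  have hsum : (D3 n).card * (perm * ∑ i : Fin n,
        (C.filter fun ω => i < ω⁻¹ i ∧ ω i < i).card)
      = perm * ((∑ i : Fin n, (univ.filter fun p : Fin n × Fin n =>
          i < p.1 ∧ p.2 < i).card) * (M * C.card)) := by
    calc (D3 n).card * (perm * ∑ i : Fin n,
          (C.filter fun ω => i < ω⁻¹ i ∧ ω i < i).card)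
        = ∑ i : Fin n, (D3 n).card
            * (perm * (C.filter fun ω => i < ω⁻¹ i ∧ ω i < i).card) := by
          rw [Finset.mul_sum, Finset.mul_sum]
      _ = ∑ i : Fin n, perm * ((univ.filter fun p : Fin n × Fin n =>
            i < p.1 ∧ p.2 < i).card * (M * C.card)) := Finset.sum_congr rfl fun i _ => hL i
      _ = perm * ((∑ i : Fin n, (univ.filter fun p : Fin n × Fin n =>
            i < p.1 ∧ p.2 < i).card) * (M * C.card)) := by
          rw [Finset.sum_mul, Finset.mul_sum]
  have htrip : (∑ i : Fin n,
        (univ.filter fun p : Fin n × Fin n => i < p.1 ∧ p.2 < i).card) = (S3 n).card := by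
    rw [← triple_fiber (fun i a b => i < a ∧ b < i)]
    rw [show (univ.filter fun t : Fin n × Fin n × Fin n => t.1 < t.2.1 ∧ t.2.2 < t.1)
        = univ.filter fun t : Fin n × Fin n × Fin n => t.2.2 < t.1 ∧ t.1 < t.2.1 from
      Finset.filter_congr fun t _ => and_comm]
    exact cls4_card
  have hmain : (D3 n).card * (perm * (6 * ∑ ω ∈ C, cdd ω))
      = (D3 n).card * (perm * (M * C.card)) := by
    calc (D3 n).card * (perm * (6 * ∑ ω ∈ C, cdd ω))
        = 6 * ((D3 n).card * (perm * ∑ i : Fin n,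
            (C.filter fun ω => i < ω⁻¹ i ∧ ω i < i).card)) := by rw [hswap]; ring
      _ = 6 * (perm * ((S3 n).card * (M * C.card))) := by rw [hsum, htrip]
      _ = perm * ((6 * (S3 n).card) * (M * C.card)) := by ring
      _ = perm * ((D3 n).card * (M * C.card)) := by rw [six_mul_S3]
      _ = (D3 n).card * (perm * (M * C.card)) := by ring
  have h1 := Nat.eq_of_mul_eq_mul_left (D3_pos hn) hmain
  exact Nat.eq_of_mul_eq_mul_left perm_pos h1

lemma key_cv (hn : 3 ≤ n) (C : Finset (Equiv.Perm (Fin n)))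
    (hC : ∀ (σ ω : Equiv.Perm (Fin n)), ω ∈ C → σ * ω * σ⁻¹ ∈ C) (M : ℕ)
    (hm : ∀ ω ∈ C, (univ.filter fun j => ω j ≠ j ∧ ω (ω j) ≠ j).card = M)
    (m2 : ℕ) (hm2 : ∀ ω ∈ C, (univ.filter fun j => ω j ≠ j ∧ ω (ω j) = j).card = m2) :
    6 * (∑ ω ∈ C, cv ω) = 2 * (M * C.card) + 3 * (m2 * C.card) := by
  classical
  set perm := (univ : Finset (Equiv.Perm (Fin n))).card with hpm
  have hswap : ∑ ω ∈ C, cv ω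
      = ∑ i : Fin n, (C.filter fun ω => i < ω⁻¹ i ∧ i < ω i).card := by
    simp_rw [cv, Finset.card_filter]
    exact Finset.sum_comm
  have hsplit : ∀ i : Fin n, (C.filter fun ω => i < ω⁻¹ i ∧ i < ω i).card
      = (C.filter fun ω => i < ω⁻¹ i ∧ i < ω i ∧ ω⁻¹ i ≠ ω i).card
        + (C.filter fun ω => i < ω i ∧ ω⁻¹ i = ω i).card := by
    intro i
    rw [← Finset.card_filter_add_card_filter_not
      (s := C.filter fun ω => i < ω⁻¹ i ∧ i < ω i) (fun ω => ω⁻¹ i ≠ ω i),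
      Finset.filter_filter, Finset.filter_filter]
    congr 1
    · apply congrArg
      apply Finset.filter_congr; intro ω _
      exact ⟨fun h => ⟨h.1.1, h.1.2, h.2⟩, fun h => ⟨⟨h.1, h.2.1⟩, h.2.2⟩⟩
    · apply congrArg
      apply Finset.filter_congr; intro ω _
      constructor
      · rintro ⟨⟨h1, h2⟩, h3⟩
        exact ⟨h2, not_not.1 h3⟩
      · rintro ⟨h1, h2⟩
        exact ⟨⟨by rw [h2]; exact h1, h1⟩, fun hne => hne h2⟩
  -- the 3-part
  have hL3 : ∀ i : Fin n, (D3 n).card * (perm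
      * (C.filter fun ω => i < ω⁻¹ i ∧ i < ω i ∧ ω⁻¹ i ≠ ω i).card)
      = perm * ((univ.filter fun p : Fin n × Fin n =>
          i < p.1 ∧ i < p.2 ∧ p.1 ≠ p.2).card * (M * C.card)) :=
    fun i => L3 C hC M hm i (fun a => i < a) (fun b => i < b)
      (fun a h => ne_of_gt h) (fun b h => ne_of_gt h)
  have hsum3 : (D3 n).card * (perm * ∑ i : Fin n,
        (C.filter fun ω => i < ω⁻¹ i ∧ i < ω i ∧ ω⁻¹ i ≠ ω i).card)
      = perm * ((∑ i : Fin n, (univ.filter fun p : Fin n × Fin n =>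
          i < p.1 ∧ i < p.2 ∧ p.1 ≠ p.2).card) * (M * C.card)) := by
    calc (D3 n).card * (perm * ∑ i : Fin n,
          (C.filter fun ω => i < ω⁻¹ i ∧ i < ω i ∧ ω⁻¹ i ≠ ω i).card)
        = ∑ i : Fin n, (D3 n).card * (perm
            * (C.filter fun ω => i < ω⁻¹ i ∧ i < ω i ∧ ω⁻¹ i ≠ ω i).card) := by
          rw [Finset.mul_sum, Finset.mul_sum]
      _ = ∑ i : Fin n, perm * ((univ.filter fun p : Fin n × Fin n =>
            i < p.1 ∧ i < p.2 ∧ p.1 ≠ p.2).card * (M * C.card)) :=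
          Finset.sum_congr rfl fun i _ => hL3 i
      _ = perm * ((∑ i : Fin n, (univ.filter fun p : Fin n × Fin n =>
            i < p.1 ∧ i < p.2 ∧ p.1 ≠ p.2).card) * (M * C.card)) := by
          rw [Finset.sum_mul, Finset.mul_sum]
  have htrip3 : 3 * (∑ i : Fin n, (univ.filter fun p : Fin n × Fin n =>
        i < p.1 ∧ i < p.2 ∧ p.1 ≠ p.2).card) = (D3 n).card := by
    rw [← triple_fiber (fun i a b => i < a ∧ i < b ∧ a ≠ b)]
    have hsp : (univ.filter fun t : Fin n × Fin n × Fin n =>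
          t.1 < t.2.1 ∧ t.1 < t.2.2 ∧ t.2.1 ≠ t.2.2).card
        = (univ.filter fun t : Fin n × Fin n × Fin n =>
            (t.1 < t.2.1 ∧ t.1 < t.2.2 ∧ t.2.1 ≠ t.2.2) ∧ t.2.1 < t.2.2).card
          + (univ.filter fun t : Fin n × Fin n × Fin n =>
              (t.1 < t.2.1 ∧ t.1 < t.2.2 ∧ t.2.1 ≠ t.2.2) ∧ ¬ t.2.1 < t.2.2).card := by
      rw [← Finset.card_filter_add_card_filter_not
        (s := univ.filter fun t : Fin n × Fin n × Fin n =>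
          t.1 < t.2.1 ∧ t.1 < t.2.2 ∧ t.2.1 ≠ t.2.2) (fun t => t.2.1 < t.2.2),
        Finset.filter_filter, Finset.filter_filter]
    rw [hsp]
    have e1 : (univ.filter fun t : Fin n × Fin n × Fin n =>
          (t.1 < t.2.1 ∧ t.1 < t.2.2 ∧ t.2.1 ≠ t.2.2) ∧ t.2.1 < t.2.2)
        = univ.filter fun t : Fin n × Fin n × Fin n => t.1 < t.2.1 ∧ t.2.1 < t.2.2 := by
      apply Finset.filter_congr; intro t _
      constructor
      · rintro ⟨⟨h1, h2, h3⟩, h4⟩; exact ⟨h1, h4⟩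
      · rintro ⟨h1, h2⟩; exact ⟨⟨h1, h1.trans h2, ne_of_lt h2⟩, h2⟩
    have e2 : (univ.filter fun t : Fin n × Fin n × Fin n =>
          (t.1 < t.2.1 ∧ t.1 < t.2.2 ∧ t.2.1 ≠ t.2.2) ∧ ¬ t.2.1 < t.2.2)
        = univ.filter fun t : Fin n × Fin n × Fin n => t.1 < t.2.2 ∧ t.2.2 < t.2.1 := by
      apply Finset.filter_congr; intro t _
      constructor
      · rintro ⟨⟨h1, h2, h3⟩, h4⟩
        exact ⟨h2, (not_lt_iff_of_ne h3).1 h4⟩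
      · rintro ⟨h1, h2⟩
        exact ⟨⟨h1.trans h2, h1, ne_of_gt h2⟩, fun hh => lt_asymm h2 hh⟩
    rw [e1, e2]
    have hS : (univ.filter fun t : Fin n × Fin n × Fin n =>
        t.1 < t.2.1 ∧ t.2.1 < t.2.2).card = (S3 n).card := rfl
    rw [hS, cls2_card]
    have := six_mul_S3 (n := n)
    omega
  -- the 2-part
  have hL2 : ∀ i : Fin n, (D2 n).card * (perm
      * (C.filter fun ω => i < ω i ∧ ω⁻¹ i = ω i).card)
      = perm * ((univ.filter fun b : Fin n => i < b).card * (m2 * C.card)) :=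
    fun i => L2 C hC m2 hm2 i (fun b => i < b) (fun b h => ne_of_gt h)
  have hsum2 : (D2 n).card * (perm * ∑ i : Fin n,
        (C.filter fun ω => i < ω i ∧ ω⁻¹ i = ω i).card)
      = perm * ((∑ i : Fin n, (univ.filter fun b : Fin n => i < b).card)
          * (m2 * C.card)) := by
    calc (D2 n).card * (perm * ∑ i : Fin n,
          (C.filter fun ω => i < ω i ∧ ω⁻¹ i = ω i).card)
        = ∑ i : Fin n, (D2 n).card * (perm
            * (C.filter fun ω => i < ω i ∧ ω⁻¹ i = ω i).card) := by
          rw [Finset.mul_sum, Finset.mul_sum]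
      _ = ∑ i : Fin n, perm * ((univ.filter fun b : Fin n => i < b).card
            * (m2 * C.card)) := Finset.sum_congr rfl fun i _ => hL2 i
      _ = perm * ((∑ i : Fin n, (univ.filter fun b : Fin n => i < b).card)
            * (m2 * C.card)) := by
          rw [Finset.sum_mul, Finset.mul_sum]
  have hpair : 2 * (∑ i : Fin n, (univ.filter fun b : Fin n => i < b).card)
      = (D2 n).card := by
    rw [← pair_fiber (fun i b => i < b)]
    exact pair_lt_card
  -- conclude the two halves
  have h3 : 3 * (∑ i : Fin n,
      (C.filter fun ω => i < ω⁻¹ i ∧ i < ω i ∧ ω⁻¹ i ≠ ω i).card) = M * C.card := by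
    have hmain : (D3 n).card * (perm * (3 * ∑ i : Fin n,
          (C.filter fun ω => i < ω⁻¹ i ∧ i < ω i ∧ ω⁻¹ i ≠ ω i).card))
        = (D3 n).card * (perm * (M * C.card)) := by
      calc (D3 n).card * (perm * (3 * ∑ i : Fin n,
            (C.filter fun ω => i < ω⁻¹ i ∧ i < ω i ∧ ω⁻¹ i ≠ ω i).card))
          = 3 * ((D3 n).card * (perm * ∑ i : Fin n,
              (C.filter fun ω => i < ω⁻¹ i ∧ i < ω i ∧ ω⁻¹ i ≠ ω i).card)) := by ring
        _ = 3 * (perm * ((∑ i : Fin n, (univ.filter fun p : Fin n × Fin n =>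
              i < p.1 ∧ i < p.2 ∧ p.1 ≠ p.2).card) * (M * C.card))) := by rw [hsum3]
        _ = perm * ((3 * ∑ i : Fin n, (univ.filter fun p : Fin n × Fin n =>
              i < p.1 ∧ i < p.2 ∧ p.1 ≠ p.2).card) * (M * C.card)) := by ring
        _ = perm * ((D3 n).card * (M * C.card)) := by rw [htrip3]
        _ = (D3 n).card * (perm * (M * C.card)) := by ring
    have h1 := Nat.eq_of_mul_eq_mul_left (D3_pos hn) hmain
    exact Nat.eq_of_mul_eq_mul_left perm_pos h1
  have h2 : 2 * (∑ i : Fin n,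
      (C.filter fun ω => i < ω i ∧ ω⁻¹ i = ω i).card) = m2 * C.card := by
    have hmain : (D2 n).card * (perm * (2 * ∑ i : Fin n,
          (C.filter fun ω => i < ω i ∧ ω⁻¹ i = ω i).card))
        = (D2 n).card * (perm * (m2 * C.card)) := by
      calc (D2 n).card * (perm * (2 * ∑ i : Fin n,
            (C.filter fun ω => i < ω i ∧ ω⁻¹ i = ω i).card))
          = 2 * ((D2 n).card * (perm * ∑ i : Fin n,
              (C.filter fun ω => i < ω i ∧ ω⁻¹ i = ω i).card)) := by ring
        _ = 2 * (perm * ((∑ i : Fin n, (univ.filter fun b : Fin n => i < b).card)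
              * (m2 * C.card))) := by rw [hsum2]
        _ = perm * ((2 * ∑ i : Fin n, (univ.filter fun b : Fin n => i < b).card)
              * (m2 * C.card)) := by ring
        _ = perm * ((D2 n).card * (m2 * C.card)) := by rw [hpair]
        _ = (D2 n).card * (perm * (m2 * C.card)) := by ring
    have h1 := Nat.eq_of_mul_eq_mul_left (D2_pos hn) hmain
    exact Nat.eq_of_mul_eq_mul_left perm_pos h1
  have hsumsplit : ∑ ω ∈ C, cv ω
      = (∑ i : Fin n, (C.filter fun ω => i < ω⁻¹ i ∧ i < ω i ∧ ω⁻¹ i ≠ ω i).card)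
        + ∑ i : Fin n, (C.filter fun ω => i < ω i ∧ ω⁻¹ i = ω i).card := by
    rw [hswap, ← Finset.sum_add_distrib]
    exact Finset.sum_congr rfl fun i _ => hsplit i
  calc 6 * (∑ ω ∈ C, cv ω)
      = 2 * (3 * ∑ i : Fin n,
          (C.filter fun ω => i < ω⁻¹ i ∧ i < ω i ∧ ω⁻¹ i ≠ ω i).card)
        + 3 * (2 * ∑ i : Fin n,
          (C.filter fun ω => i < ω i ∧ ω⁻¹ i = ω i).card) := by rw [hsumsplit]; ring
    _ = 2 * (M * C.card) + 3 * (m2 * C.card) := by rw [h3, h2]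

lemma key_cpk (hn : 3 ≤ n) (C : Finset (Equiv.Perm (Fin n)))
    (hC : ∀ (σ ω : Equiv.Perm (Fin n)), ω ∈ C → σ * ω * σ⁻¹ ∈ C) (M : ℕ)
    (hm : ∀ ω ∈ C, (univ.filter fun j => ω j ≠ j ∧ ω (ω j) ≠ j).card = M)
    (m2 : ℕ) (hm2 : ∀ ω ∈ C, (univ.filter fun j => ω j ≠ j ∧ ω (ω j) = j).card = m2) :
    6 * (∑ ω ∈ C, cpk ω) = 2 * (M * C.card) + 3 * (m2 * C.card) := by
  classical
  set perm := (univ : Finset (Equiv.Perm (Fin n))).card with hpm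
  have hswap : ∑ ω ∈ C, cpk ω
      = ∑ i : Fin n, (C.filter fun ω => ω⁻¹ i < i ∧ ω i < i).card := by
    simp_rw [cpk, Finset.card_filter]
    exact Finset.sum_comm
  have hsplit : ∀ i : Fin n, (C.filter fun ω => ω⁻¹ i < i ∧ ω i < i).card
      = (C.filter fun ω => ω⁻¹ i < i ∧ ω i < i ∧ ω⁻¹ i ≠ ω i).card
        + (C.filter fun ω => ω i < i ∧ ω⁻¹ i = ω i).card := by
    intro i
    rw [← Finset.card_filter_add_card_filter_not
      (s := C.filter fun ω => ω⁻¹ i < i ∧ ω i < i) (fun ω => ω⁻¹ i ≠ ω i),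
      Finset.filter_filter, Finset.filter_filter]
    congr 1
    · apply congrArg
      apply Finset.filter_congr; intro ω _
      exact ⟨fun h => ⟨h.1.1, h.1.2, h.2⟩, fun h => ⟨⟨h.1, h.2.1⟩, h.2.2⟩⟩
    · apply congrArg
      apply Finset.filter_congr; intro ω _
      constructor
      · rintro ⟨⟨h1, h2⟩, h3⟩
        exact ⟨h2, not_not.1 h3⟩
      · rintro ⟨h1, h2⟩
        exact ⟨⟨by rw [h2]; exact h1, h1⟩, fun hne => hne h2⟩
  have hL3 : ∀ i : Fin n, (D3 n).card * (perm
      * (C.filter fun ω => ω⁻¹ i < i ∧ ω i < i ∧ ω⁻¹ i ≠ ω i).card)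
      = perm * ((univ.filter fun p : Fin n × Fin n =>
          p.1 < i ∧ p.2 < i ∧ p.1 ≠ p.2).card * (M * C.card)) :=
    fun i => L3 C hC M hm i (fun a => a < i) (fun b => b < i)
      (fun a h => ne_of_lt h) (fun b h => ne_of_lt h)
  have hsum3 : (D3 n).card * (perm * ∑ i : Fin n,
        (C.filter fun ω => ω⁻¹ i < i ∧ ω i < i ∧ ω⁻¹ i ≠ ω i).card)
      = perm * ((∑ i : Fin n, (univ.filter fun p : Fin n × Fin n =>
          p.1 < i ∧ p.2 < i ∧ p.1 ≠ p.2).card) * (M * C.card)) := by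
    calc (D3 n).card * (perm * ∑ i : Fin n,
          (C.filter fun ω => ω⁻¹ i < i ∧ ω i < i ∧ ω⁻¹ i ≠ ω i).card)
        = ∑ i : Fin n, (D3 n).card * (perm
            * (C.filter fun ω => ω⁻¹ i < i ∧ ω i < i ∧ ω⁻¹ i ≠ ω i).card) := by
          rw [Finset.mul_sum, Finset.mul_sum]
      _ = ∑ i : Fin n, perm * ((univ.filter fun p : Fin n × Fin n =>
            p.1 < i ∧ p.2 < i ∧ p.1 ≠ p.2).card * (M * C.card)) :=
          Finset.sum_congr rfl fun i _ => hL3 i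
      _ = perm * ((∑ i : Fin n, (univ.filter fun p : Fin n × Fin n =>
            p.1 < i ∧ p.2 < i ∧ p.1 ≠ p.2).card) * (M * C.card)) := by
          rw [Finset.sum_mul, Finset.mul_sum]
  have htrip3 : 3 * (∑ i : Fin n, (univ.filter fun p : Fin n × Fin n =>
        p.1 < i ∧ p.2 < i ∧ p.1 ≠ p.2).card) = (D3 n).card := by
    rw [← triple_fiber (fun i a b => a < i ∧ b < i ∧ a ≠ b)]
    have hsp : (univ.filter fun t : Fin n × Fin n × Fin n =>
          t.2.1 < t.1 ∧ t.2.2 < t.1 ∧ t.2.1 ≠ t.2.2).card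
        = (univ.filter fun t : Fin n × Fin n × Fin n =>
            (t.2.1 < t.1 ∧ t.2.2 < t.1 ∧ t.2.1 ≠ t.2.2) ∧ t.2.1 < t.2.2).card
          + (univ.filter fun t : Fin n × Fin n × Fin n =>
              (t.2.1 < t.1 ∧ t.2.2 < t.1 ∧ t.2.1 ≠ t.2.2) ∧ ¬ t.2.1 < t.2.2).card := by
      rw [← Finset.card_filter_add_card_filter_not
        (s := univ.filter fun t : Fin n × Fin n × Fin n =>
          t.2.1 < t.1 ∧ t.2.2 < t.1 ∧ t.2.1 ≠ t.2.2) (fun t => t.2.1 < t.2.2),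
        Finset.filter_filter, Finset.filter_filter]
    rw [hsp]
    have e1 : (univ.filter fun t : Fin n × Fin n × Fin n =>
          (t.2.1 < t.1 ∧ t.2.2 < t.1 ∧ t.2.1 ≠ t.2.2) ∧ t.2.1 < t.2.2)
        = univ.filter fun t : Fin n × Fin n × Fin n => t.2.1 < t.2.2 ∧ t.2.2 < t.1 := by
      apply Finset.filter_congr; intro t _
      constructor
      · rintro ⟨⟨h1, h2, h3⟩, h4⟩; exact ⟨h4, h2⟩
      · rintro ⟨h1, h2⟩; exact ⟨⟨h1.trans h2, h2, ne_of_lt h1⟩, h1⟩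
    have e2 : (univ.filter fun t : Fin n × Fin n × Fin n =>
          (t.2.1 < t.1 ∧ t.2.2 < t.1 ∧ t.2.1 ≠ t.2.2) ∧ ¬ t.2.1 < t.2.2)
        = univ.filter fun t : Fin n × Fin n × Fin n => t.2.2 < t.2.1 ∧ t.2.1 < t.1 := by
      apply Finset.filter_congr; intro t _
      constructor
      · rintro ⟨⟨h1, h2, h3⟩, h4⟩
        exact ⟨(not_lt_iff_of_ne h3).1 h4, h1⟩
      · rintro ⟨h1, h2⟩
        exact ⟨⟨h2, h1.trans h2, ne_of_gt h1⟩, fun hh => lt_asymm h1 hh⟩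
    rw [e1, e2, cls5_card, cls6_card]
    have := six_mul_S3 (n := n)
    omega
  have hL2 : ∀ i : Fin n, (D2 n).card * (perm
      * (C.filter fun ω => ω i < i ∧ ω⁻¹ i = ω i).card)
      = perm * ((univ.filter fun b : Fin n => b < i).card * (m2 * C.card)) :=
    fun i => L2 C hC m2 hm2 i (fun b => b < i) (fun b h => ne_of_lt h)
  have hsum2 : (D2 n).card * (perm * ∑ i : Fin n,
        (C.filter fun ω => ω i < i ∧ ω⁻¹ i = ω i).card)
      = perm * ((∑ i : Fin n, (univ.filter fun b : Fin n => b < i).card)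
          * (m2 * C.card)) := by
    calc (D2 n).card * (perm * ∑ i : Fin n,
          (C.filter fun ω => ω i < i ∧ ω⁻¹ i = ω i).card)
        = ∑ i : Fin n, (D2 n).card * (perm
            * (C.filter fun ω => ω i < i ∧ ω⁻¹ i = ω i).card) := by
          rw [Finset.mul_sum, Finset.mul_sum]
      _ = ∑ i : Fin n, perm * ((univ.filter fun b : Fin n => b < i).card
            * (m2 * C.card)) := Finset.sum_congr rfl fun i _ => hL2 i
      _ = perm * ((∑ i : Fin n, (univ.filter fun b : Fin n => b < i).card)
            * (m2 * C.card)) := by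
          rw [Finset.sum_mul, Finset.mul_sum]
  have hpair : 2 * (∑ i : Fin n, (univ.filter fun b : Fin n => b < i).card)
      = (D2 n).card := by
    rw [← pair_fiber (fun i b => b < i)]
    exact pair_gt_card
  have h3 : 3 * (∑ i : Fin n,
      (C.filter fun ω => ω⁻¹ i < i ∧ ω i < i ∧ ω⁻¹ i ≠ ω i).card) = M * C.card := by
    have hmain : (D3 n).card * (perm * (3 * ∑ i : Fin n,
          (C.filter fun ω => ω⁻¹ i < i ∧ ω i < i ∧ ω⁻¹ i ≠ ω i).card))
        = (D3 n).card * (perm * (M * C.card)) := by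
      calc (D3 n).card * (perm * (3 * ∑ i : Fin n,
            (C.filter fun ω => ω⁻¹ i < i ∧ ω i < i ∧ ω⁻¹ i ≠ ω i).card))
          = 3 * ((D3 n).card * (perm * ∑ i : Fin n,
              (C.filter fun ω => ω⁻¹ i < i ∧ ω i < i ∧ ω⁻¹ i ≠ ω i).card)) := by ring
        _ = 3 * (perm * ((∑ i : Fin n, (univ.filter fun p : Fin n × Fin n =>
              p.1 < i ∧ p.2 < i ∧ p.1 ≠ p.2).card) * (M * C.card))) := by rw [hsum3]
        _ = perm * ((3 * ∑ i : Fin n, (univ.filter fun p : Fin n × Fin n =>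
              p.1 < i ∧ p.2 < i ∧ p.1 ≠ p.2).card) * (M * C.card)) := by ring
        _ = perm * ((D3 n).card * (M * C.card)) := by rw [htrip3]
        _ = (D3 n).card * (perm * (M * C.card)) := by ring
    have h1 := Nat.eq_of_mul_eq_mul_left (D3_pos hn) hmain
    exact Nat.eq_of_mul_eq_mul_left perm_pos h1
  have h2 : 2 * (∑ i : Fin n,
      (C.filter fun ω => ω i < i ∧ ω⁻¹ i = ω i).card) = m2 * C.card := by
    have hmain : (D2 n).card * (perm * (2 * ∑ i : Fin n,
          (C.filter fun ω => ω i < i ∧ ω⁻¹ i = ω i).card))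
        = (D2 n).card * (perm * (m2 * C.card)) := by
      calc (D2 n).card * (perm * (2 * ∑ i : Fin n,
            (C.filter fun ω => ω i < i ∧ ω⁻¹ i = ω i).card))
          = 2 * ((D2 n).card * (perm * ∑ i : Fin n,
              (C.filter fun ω => ω i < i ∧ ω⁻¹ i = ω i).card)) := by ring
        _ = 2 * (perm * ((∑ i : Fin n, (univ.filter fun b : Fin n => b < i).card)
              * (m2 * C.card))) := by rw [hsum2]
        _ = perm * ((2 * ∑ i : Fin n, (univ.filter fun b : Fin n => b < i).card)
              * (m2 * C.card)) := by ring
        _ = perm * ((D2 n).card * (m2 * C.card)) := by rw [hpair]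
        _ = (D2 n).card * (perm * (m2 * C.card)) := by ring
    have h1 := Nat.eq_of_mul_eq_mul_left (D2_pos hn) hmain
    exact Nat.eq_of_mul_eq_mul_left perm_pos h1
  have hsumsplit : ∑ ω ∈ C, cpk ω
      = (∑ i : Fin n, (C.filter fun ω => ω⁻¹ i < i ∧ ω i < i ∧ ω⁻¹ i ≠ ω i).card)
        + ∑ i : Fin n, (C.filter fun ω => ω i < i ∧ ω⁻¹ i = ω i).card := by
    rw [hswap, ← Finset.sum_add_distrib]
    exact Finset.sum_congr rfl fun i _ => hsplit i
  calc 6 * (∑ ω ∈ C, cpk ω)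
      = 2 * (3 * ∑ i : Fin n,
          (C.filter fun ω => ω⁻¹ i < i ∧ ω i < i ∧ ω⁻¹ i ≠ ω i).card)
        + 3 * (2 * ∑ i : Fin n,
          (C.filter fun ω => ω i < i ∧ ω⁻¹ i = ω i).card) := by rw [hsumsplit]; ring
    _ = 2 * (M * C.card) + 3 * (m2 * C.card) := by rw [h3, h2]


end Stmt11Aux

open Stmt11Aux

theorem stmt11 (n : ℕ) (hn : 3 ≤ n) (lam : n.Partition) (a1 a2 : ℕ)
    (ha1 : a1 = Multiset.count 1 lam.parts) (ha2 : a2 = Multiset.count 2 lam.parts) :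
    (∑ ω ∈ conjClass n lam, (cda ω : ℝ)) / ((conjClass n lam).card : ℝ)
      = ((n : ℝ) - (a1 : ℝ) - 2 * (a2 : ℝ)) / 6 ∧
    (∑ ω ∈ conjClass n lam, (cdd ω : ℝ)) / ((conjClass n lam).card : ℝ)
      = ((n : ℝ) - (a1 : ℝ) - 2 * (a2 : ℝ)) / 6 ∧
    (∑ ω ∈ conjClass n lam, (cv ω : ℝ)) / ((conjClass n lam).card : ℝ)
      = ((n : ℝ) - (a1 : ℝ) + (a2 : ℝ)) / 3 ∧
    (∑ ω ∈ conjClass n lam, (cpk ω : ℝ)) / ((conjClass n lam).card : ℝ)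
      = ((n : ℝ) - (a1 : ℝ) + (a2 : ℝ)) / 3 := by

  classical
  set C := conjClass n lam with hCdef
  have hC : ∀ (σ ω : Equiv.Perm (Fin n)), ω ∈ C → σ * ω * σ⁻¹ ∈ C :=
    fun σ ω h => conjClass_conj σ ω h
  obtain ⟨ω0, hω0⟩ := conjClass_nonempty lam
  have hs2 : ∀ ω ∈ C, (univ.filter fun j => ω j ≠ j ∧ ω (ω j) = j).card = 2 * a2 :=
    fun ω h => by rw [conjClass_s2 h, ha2]
  have hs3 : ∀ ω ∈ C, (univ.filter fun j => ω j ≠ j ∧ ω (ω j) ≠ j).card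
      + 2 * a2 + a1 = n := fun ω h => by
    rw [ha1, ha2]; exact conjClass_s3 h
  set M := n - (2 * a2 + a1) with hMdef
  have hM : M + 2 * a2 + a1 = n := by
    have := hs3 ω0 hω0; omega
  have hm : ∀ ω ∈ C, (univ.filter fun j => ω j ≠ j ∧ ω (ω j) ≠ j).card = M :=
    fun ω h => by have := hs3 ω h; omega
  have hcda := key_cda hn C hC M hm
  have hcdd := key_cdd hn C hC M hm
  have hcv := key_cv hn C hC M hm (2 * a2) hs2
  have hcpk := key_cpk hn C hC M hm (2 * a2) hs2
  have hCc : (0 : ℝ) < (C.card : ℝ) := by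
    exact_mod_cast Finset.card_pos.2 ⟨ω0, hω0⟩
  have hCne : (C.card : ℝ) ≠ 0 := ne_of_gt hCc
  have hMr : (M : ℝ) + 2 * (a2 : ℝ) + (a1 : ℝ) = (n : ℝ) := by exact_mod_cast hM
  have hcdaR : 6 * (∑ ω ∈ C, (cda ω : ℝ)) = (M : ℝ) * (C.card : ℝ) := by
    have : ((6 * ∑ ω ∈ C, cda ω : ℕ) : ℝ) = ((M * C.card : ℕ) : ℝ) := by rw [hcda]
    push_cast at this
    linarith
  have hcddR : 6 * (∑ ω ∈ C, (cdd ω : ℝ)) = (M : ℝ) * (C.card : ℝ) := by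
    have : ((6 * ∑ ω ∈ C, cdd ω : ℕ) : ℝ) = ((M * C.card : ℕ) : ℝ) := by rw [hcdd]
    push_cast at this
    linarith
  have hcvR : 6 * (∑ ω ∈ C, (cv ω : ℝ))
      = 2 * ((M : ℝ) * (C.card : ℝ)) + 3 * ((2 * (a2 : ℝ)) * (C.card : ℝ)) := by
    have : ((6 * ∑ ω ∈ C, cv ω : ℕ) : ℝ)
        = ((2 * (M * C.card) + 3 * ((2 * a2) * C.card) : ℕ) : ℝ) := by rw [hcv]
    push_cast at this
    linarith
  have hcpkR : 6 * (∑ ω ∈ C, (cpk ω : ℝ))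
      = 2 * ((M : ℝ) * (C.card : ℝ)) + 3 * ((2 * (a2 : ℝ)) * (C.card : ℝ)) := by
    have : ((6 * ∑ ω ∈ C, cpk ω : ℕ) : ℝ)
        = ((2 * (M * C.card) + 3 * ((2 * a2) * C.card) : ℕ) : ℝ) := by rw [hcpk]
    push_cast at this
    linarith
  refine ⟨?_, ?_, ?_, ?_⟩
  · rw [div_eq_div_iff hCne (by norm_num : (6 : ℝ) ≠ 0)]
    linear_combination hcdaR + (C.card : ℝ) * hMr
  · rw [div_eq_div_iff hCne (by norm_num : (6 : ℝ) ≠ 0)]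
    linear_combination hcddR + (C.card : ℝ) * hMr
  · rw [div_eq_div_iff hCne (by norm_num : (3 : ℝ) ≠ 0)]
    linear_combination hcvR / 2 + (C.card : ℝ) * hMr
  · rw [div_eq_div_iff hCne (by norm_num : (3 : ℝ) ≠ 0)]
    linear_combination hcpkR / 2 + (C.card : ℝ) * hMr
end

section
/- Let n ≥ 3 and let λ be a partition of n with a_k parts equal to k. Over the conjugacy class C_λ, the second moment of the excedance statistic satisfies E_λ[exc²] = (n−a_1)²/4 + (n−a_1)/4 − (n−a_1+a_2)/6, and consequently the variance satisfies Var_λ[exc] = E_λ[exc²] − (E_λ[exc])² = (n − a_1 − 2a_2)/12. -/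
open Finset Equiv Equiv.Perm

variable {n : ℕ}

private lemma card_filter_mulRight (p : Equiv.Perm (Fin n) → Prop) [DecidablePred p]
    (τ : Equiv.Perm (Fin n)) :
    (Finset.univ.filter p).card = (Finset.univ.filter fun σ => p (σ * τ)).card := by
  apply Finset.card_nbij' (i := fun σ => σ * τ⁻¹) (j := fun σ => σ * τ) <;>
    simp [Set.MapsTo, Set.LeftInvOn, Set.RightInvOn, mul_assoc]

private lemma split_lt (p : Equiv.Perm (Fin n) → Prop) [DecidablePred p] (x y : Fin n)
    (hxy : x ≠ y) :
    (Finset.univ.filter p).card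
      = (Finset.univ.filter fun σ => p σ ∧ σ x < σ y).card
        + (Finset.univ.filter fun σ => p σ ∧ σ y < σ x).card := by
  have h := Finset.card_filter_add_card_filter_not
    (s := Finset.univ.filter p) (p := fun σ : Equiv.Perm (Fin n) => σ x < σ y)
  rw [Finset.filter_filter, Finset.filter_filter] at h
  rw [← h]
  congr 2
  apply Finset.filter_congr
  intro σ _
  have hne : σ x ≠ σ y := fun h' => hxy (σ.injective h')
  constructor
  · rintro ⟨hp, hlt⟩; exact ⟨hp, lt_of_le_of_ne (not_lt.mp hlt) hne.symm⟩
  · rintro ⟨hp, hlt⟩; exact ⟨hp, not_lt.mpr (le_of_lt hlt)⟩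

private lemma T_relabel (a b c : Fin n) (τ : Equiv.Perm (Fin n)) :
    (Finset.univ.filter fun σ : Equiv.Perm (Fin n) => σ a < σ b ∧ σ b < σ c).card
      = (Finset.univ.filter fun σ : Equiv.Perm (Fin n) =>
          σ (τ a) < σ (τ b) ∧ σ (τ b) < σ (τ c)).card := by
  rw [card_filter_mulRight (fun σ => σ a < σ b ∧ σ b < σ c) τ]
  rfl

private lemma L2 (a b : Fin n) (hab : a ≠ b) :
    2 * (Finset.univ.filter fun σ : Equiv.Perm (Fin n) => σ a < σ b).card
      = (Finset.univ : Finset (Equiv.Perm (Fin n))).card := by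
  have key : (Finset.univ.filter fun σ : Equiv.Perm (Fin n) => σ a < σ b).card
      = (Finset.univ.filter fun σ : Equiv.Perm (Fin n) => σ b < σ a).card := by
    rw [card_filter_mulRight (fun σ => σ a < σ b) (Equiv.swap a b)]
    congr 1
    apply Finset.filter_congr
    intro σ _
    simp [Equiv.Perm.mul_apply, Equiv.swap_apply_left, Equiv.swap_apply_right]
  have split := Finset.card_filter_add_card_filter_not
    (s := (Finset.univ : Finset (Equiv.Perm (Fin n))))
    (p := fun σ : Equiv.Perm (Fin n) => σ a < σ b)
  have neg : (Finset.univ.filter fun σ : Equiv.Perm (Fin n) => ¬ σ a < σ b).card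
      = (Finset.univ.filter fun σ : Equiv.Perm (Fin n) => σ b < σ a).card := by
    congr 1
    apply Finset.filter_congr
    intro σ _
    have hne : σ a ≠ σ b := fun h => hab (σ.injective h)
    simp only [not_lt]
    constructor
    · intro h; exact lt_of_le_of_ne h hne.symm
    · intro h; exact le_of_lt h
  omega

private lemma L3 (a b c : Fin n) (hab : a ≠ b) (hac : a ≠ c) (hbc : b ≠ c) :
    6 * (Finset.univ.filter fun σ : Equiv.Perm (Fin n) => σ a < σ b ∧ σ b < σ c).card
      = (Finset.univ : Finset (Equiv.Perm (Fin n))).card := by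
  have e1 : (Finset.univ.filter fun σ : Equiv.Perm (Fin n) => σ a < σ b ∧ σ b < σ c).card
      = (Finset.univ.filter fun σ : Equiv.Perm (Fin n) => σ a < σ c ∧ σ c < σ b).card := by
    have h := T_relabel a b c (Equiv.swap b c)
    rwa [Equiv.swap_apply_of_ne_of_ne hab hac, Equiv.swap_apply_left,
      Equiv.swap_apply_right] at h
  have e2 : (Finset.univ.filter fun σ : Equiv.Perm (Fin n) => σ a < σ b ∧ σ b < σ c).card
      = (Finset.univ.filter fun σ : Equiv.Perm (Fin n) => σ c < σ a ∧ σ a < σ b).card := by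
    have h := T_relabel a b c (Equiv.swap a b * Equiv.swap a c)
    simp only [Equiv.Perm.mul_apply, Equiv.swap_apply_left, Equiv.swap_apply_right,
      Equiv.swap_apply_of_ne_of_ne hac.symm hbc.symm,
      Equiv.swap_apply_of_ne_of_ne hab.symm hbc] at h
    exact h
  have hsplit1 := split_lt (fun σ : Equiv.Perm (Fin n) => σ a < σ b) b c hbc
  have hsplit2 := split_lt (fun σ : Equiv.Perm (Fin n) => σ a < σ b ∧ σ c < σ b) a c hac
  have id1 : (Finset.univ.filter fun σ : Equiv.Perm (Fin n) =>
        (σ a < σ b ∧ σ c < σ b) ∧ σ a < σ c).card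
      = (Finset.univ.filter fun σ : Equiv.Perm (Fin n) => σ a < σ c ∧ σ c < σ b).card := by
    congr 1
    apply Finset.filter_congr
    intro σ _
    exact ⟨fun ⟨⟨_, h2⟩, h3⟩ => ⟨h3, h2⟩, fun ⟨h3, h2⟩ => ⟨⟨h3.trans h2, h2⟩, h3⟩⟩
  have id2 : (Finset.univ.filter fun σ : Equiv.Perm (Fin n) =>
        (σ a < σ b ∧ σ c < σ b) ∧ σ c < σ a).card
      = (Finset.univ.filter fun σ : Equiv.Perm (Fin n) => σ c < σ a ∧ σ a < σ b).card := by
    congr 1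
    apply Finset.filter_congr
    intro σ _
    exact ⟨fun ⟨⟨h1, _⟩, h3⟩ => ⟨h3, h1⟩, fun ⟨h3, h1⟩ => ⟨⟨h1, h3.trans h1⟩, h3⟩⟩
  have hL2 := L2 a b hab
  beta_reduce at hsplit1 hsplit2
  omega

private lemma Q_relabel (a b c d : Fin n) (τ : Equiv.Perm (Fin n)) :
    (Finset.univ.filter fun σ : Equiv.Perm (Fin n) => σ a < σ b ∧ σ c < σ d).card
      = (Finset.univ.filter fun σ : Equiv.Perm (Fin n) =>
          σ (τ a) < σ (τ b) ∧ σ (τ c) < σ (τ d)).card := by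
  rw [card_filter_mulRight (fun σ => σ a < σ b ∧ σ c < σ d) τ]
  rfl

private lemma L4 (a b c d : Fin n) (hab : a ≠ b) (hcd : c ≠ d)
    (hac : a ≠ c) (had : a ≠ d) (hbc : b ≠ c) (hbd : b ≠ d) :
    4 * (Finset.univ.filter fun σ : Equiv.Perm (Fin n) => σ a < σ b ∧ σ c < σ d).card
      = (Finset.univ : Finset (Equiv.Perm (Fin n))).card := by
  have e1 : (Finset.univ.filter fun σ : Equiv.Perm (Fin n) => σ a < σ b ∧ σ c < σ d).card
      = (Finset.univ.filter fun σ : Equiv.Perm (Fin n) => σ a < σ b ∧ σ d < σ c).card := by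
    have h := Q_relabel a b c d (Equiv.swap c d)
    rwa [Equiv.swap_apply_of_ne_of_ne hac had, Equiv.swap_apply_of_ne_of_ne hbc hbd,
      Equiv.swap_apply_left, Equiv.swap_apply_right] at h
  have hsplit := split_lt (fun σ : Equiv.Perm (Fin n) => σ a < σ b) c d hcd
  have hL2 := L2 a b hab
  beta_reduce at hsplit
  omega

/-- number of `σ` making excedance at both images -/
private def Acnt (ω : Equiv.Perm (Fin n)) (a b : Fin n) : ℕ :=
  (Finset.univ.filter fun σ : Equiv.Perm (Fin n) => σ a < σ (ω a) ∧ σ b < σ (ω b)).card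

private lemma Acnt_fix_left (ω : Equiv.Perm (Fin n)) (a b : Fin n) (h : ω a = a) :
    Acnt ω a b = 0 := by
  unfold Acnt
  rw [Finset.card_eq_zero, Finset.filter_eq_empty_iff]
  intro σ _
  rw [h]
  rintro ⟨h1, -⟩
  exact lt_irrefl _ h1

private lemma Acnt_fix_right (ω : Equiv.Perm (Fin n)) (a b : Fin n) (h : ω b = b) :
    Acnt ω a b = 0 := by
  unfold Acnt
  rw [Finset.card_eq_zero, Finset.filter_eq_empty_iff]
  intro σ _
  rw [h]
  rintro ⟨-, h2⟩
  exact lt_irrefl _ h2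

private lemma Acnt_diag (ω : Equiv.Perm (Fin n)) (a : Fin n) (h : ω a ≠ a) :
    2 * Acnt ω a a = (Finset.univ : Finset (Equiv.Perm (Fin n))).card := by
  unfold Acnt
  rw [show (Finset.univ.filter fun σ : Equiv.Perm (Fin n) =>
      σ a < σ (ω a) ∧ σ a < σ (ω a)) = Finset.univ.filter fun σ : Equiv.Perm (Fin n) =>
      σ a < σ (ω a) from Finset.filter_congr fun σ _ => and_self_iff]
  exact L2 a (ω a) (Ne.symm h)

private lemma Acnt_swap (ω : Equiv.Perm (Fin n)) (a b : Fin n) (h1 : ω a = b) (h2 : ω b = a) :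
    Acnt ω a b = 0 := by
  unfold Acnt
  rw [Finset.card_eq_zero, Finset.filter_eq_empty_iff]
  intro σ _
  rw [h1, h2]
  rintro ⟨ha, hb⟩
  exact lt_irrefl _ (ha.trans hb)

private lemma Acnt_p1 (ω : Equiv.Perm (Fin n)) (a b : Fin n) (hab : a ≠ b)
    (h1 : ω a = b) (h2 : ω b ≠ a) :
    6 * Acnt ω a b = (Finset.univ : Finset (Equiv.Perm (Fin n))).card := by
  have hbb : ω b ≠ b := by
    intro hb
    exact hab (ω.injective (h1.trans hb.symm))
  unfold Acnt
  rw [h1]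
  exact L3 a b (ω b) hab (Ne.symm h2) (Ne.symm hbb)

private lemma Acnt_p2 (ω : Equiv.Perm (Fin n)) (a b : Fin n) (hab : a ≠ b)
    (h1 : ω b = a) (h2 : ω a ≠ b) :
    6 * Acnt ω a b = (Finset.univ : Finset (Equiv.Perm (Fin n))).card := by
  have haa : ω a ≠ a := by
    intro ha
    exact hab (ω.injective (ha.trans h1.symm))
  unfold Acnt
  rw [h1]
  rw [show (Finset.univ.filter fun σ : Equiv.Perm (Fin n) =>
      σ a < σ (ω a) ∧ σ b < σ a) = Finset.univ.filter fun σ : Equiv.Perm (Fin n) =>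
      σ b < σ a ∧ σ a < σ (ω a) from Finset.filter_congr fun σ _ => and_comm]
  exact L3 b a (ω a) (Ne.symm hab) (Ne.symm h2) (Ne.symm haa)

private lemma Acnt_q (ω : Equiv.Perm (Fin n)) (a b : Fin n) (hab : a ≠ b)
    (haa : ω a ≠ a) (hbb : ω b ≠ b) (h1 : ω a ≠ b) (h2 : ω b ≠ a) :
    4 * Acnt ω a b = (Finset.univ : Finset (Equiv.Perm (Fin n))).card := by
  exact L4 a (ω a) b (ω b) (Ne.symm haa) (Ne.symm hbb) hab (Ne.symm h2) h1
    (fun h => hab (ω.injective h))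

private lemma Acnt_diag_real (ω : Equiv.Perm (Fin n)) (a : Fin n) (h : ω a ≠ a) :
    (Acnt ω a a : ℝ) = ((Finset.univ : Finset (Equiv.Perm (Fin n))).card : ℝ) / 2 := by
  have h2 := Acnt_diag ω a h
  have h3 : ((2 * Acnt ω a a : ℕ) : ℝ)
      = (((Finset.univ : Finset (Equiv.Perm (Fin n))).card : ℕ) : ℝ) := by rw [h2]
  push_cast at h3
  linarith

private lemma row_sum_s (ω : Equiv.Perm (Fin n)) (a : Fin n) (ha : ω a ≠ a)
    (hs : ω (ω a) = a) :
    ∑ b, (Acnt ω a b : ℝ)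
      = ((Finset.univ : Finset (Equiv.Perm (Fin n))).card : ℝ) / 2
        + ((ω.support.card : ℝ) - 2)
          * (((Finset.univ : Finset (Equiv.Perm (Fin n))).card : ℝ) / 4) := by
  set N : ℝ := ((Finset.univ : Finset (Equiv.Perm (Fin n))).card : ℝ) with hN
  have hane : a ≠ ω a := Ne.symm ha
  have hmem_a : a ∈ ω.support := Equiv.Perm.mem_support.mpr ha
  have hmem_wa : ω a ∈ ω.support := by
    rw [Equiv.Perm.mem_support, hs]
    exact Ne.symm ha
  have hpair_sub : ({a, ω a} : Finset (Fin n)) ⊆ ω.support := by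
    intro x hx
    rcases Finset.mem_insert.mp hx with h | h
    · exact h ▸ hmem_a
    · exact (Finset.mem_singleton.mp h) ▸ hmem_wa
  have hstep1 : ∑ b, (Acnt ω a b : ℝ) = ∑ b ∈ ω.support, (Acnt ω a b : ℝ) := by
    refine (Finset.sum_subset (Finset.subset_univ _) fun b _ hb => ?_).symm
    rw [Acnt_fix_right ω a b (by simpa using Equiv.Perm.notMem_support.mp hb)]
    push_cast
    ring
  have hsdiff := Finset.sum_sdiff (f := fun b => (Acnt ω a b : ℝ)) hpair_sub
  have hpairsum : ∑ b ∈ ({a, ω a} : Finset (Fin n)), (Acnt ω a b : ℝ) = N / 2 := by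
    rw [Finset.sum_pair hane, Acnt_diag_real ω a ha, Acnt_swap ω a (ω a) rfl hs]
    push_cast
    ring
  have hrest : ∑ b ∈ ω.support \ ({a, ω a} : Finset (Fin n)), (Acnt ω a b : ℝ)
      = ((ω.support.card : ℝ) - 2) * (N / 4) := by
    have hconst : ∀ b ∈ ω.support \ ({a, ω a} : Finset (Fin n)), (Acnt ω a b : ℝ) = N / 4 := by
      intro b hb
      obtain ⟨hbs, hbp⟩ := Finset.mem_sdiff.mp hb
      simp only [Finset.mem_insert, Finset.mem_singleton, not_or] at hbp
      have hAq := Acnt_q ω a b (fun h => hbp.1 h.symm) ha (Equiv.Perm.mem_support.mp hbs)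
        (fun h => hbp.2 h.symm) (fun h => hbp.2 (ω.injective (h.trans hs.symm)))
      have h4 : ((4 * Acnt ω a b : ℕ) : ℝ)
          = (((Finset.univ : Finset (Equiv.Perm (Fin n))).card : ℕ) : ℝ) := by rw [hAq]
      push_cast at h4
      linarith
    rw [Finset.sum_congr rfl hconst, Finset.sum_const, nsmul_eq_mul]
    congr 1
    rw [Finset.card_sdiff_of_subset hpair_sub, Finset.card_pair hane]
    have h2le : 2 ≤ ω.support.card := by
      calc 2 = ({a, ω a} : Finset (Fin n)).card := (Finset.card_pair hane).symm
        _ ≤ ω.support.card := Finset.card_le_card hpair_sub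
    push_cast [Nat.cast_sub h2le]
    ring
  rw [hstep1, ← hsdiff, hpairsum, hrest]
  ring

private lemma Acnt_sixth (ω : Equiv.Perm (Fin n)) {a b : Fin n}
    (h : 6 * Acnt ω a b = (Finset.univ : Finset (Equiv.Perm (Fin n))).card) :
    (Acnt ω a b : ℝ) = ((Finset.univ : Finset (Equiv.Perm (Fin n))).card : ℝ) / 6 := by
  have h3 : ((6 * Acnt ω a b : ℕ) : ℝ)
      = (((Finset.univ : Finset (Equiv.Perm (Fin n))).card : ℕ) : ℝ) := by rw [h]
  push_cast at h3
  linarith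

private lemma row_sum_k (ω : Equiv.Perm (Fin n)) (a : Fin n) (ha : ω a ≠ a)
    (hk : ω (ω a) ≠ a) :
    ∑ b, (Acnt ω a b : ℝ)
      = ((Finset.univ : Finset (Equiv.Perm (Fin n))).card : ℝ) / 2
        + ((Finset.univ : Finset (Equiv.Perm (Fin n))).card : ℝ) / 3
        + ((ω.support.card : ℝ) - 3)
          * (((Finset.univ : Finset (Equiv.Perm (Fin n))).card : ℝ) / 4) := by
  set N : ℝ := ((Finset.univ : Finset (Equiv.Perm (Fin n))).card : ℝ) with hN
  have hane : a ≠ ω a := Ne.symm ha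
  have hainv : a ≠ ω⁻¹ a := by
    intro h
    exact ha (by conv_lhs => rw [h, Equiv.Perm.coe_inv, Equiv.apply_symm_apply])
  have hwainv : ω a ≠ ω⁻¹ a := by
    intro h
    exact hk (by rw [h, Equiv.Perm.coe_inv, Equiv.apply_symm_apply])
  have hmem_a : a ∈ ω.support := Equiv.Perm.mem_support.mpr ha
  have hmem_wa : ω a ∈ ω.support := by
    rw [Equiv.Perm.mem_support]
    intro h
    exact ha (ω.injective h)
  have hmem_inv : ω⁻¹ a ∈ ω.support := by
    rw [Equiv.Perm.mem_support, Equiv.Perm.coe_inv, Equiv.apply_symm_apply]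
    exact hainv
  have htrip_sub : ({a, ω a, ω⁻¹ a} : Finset (Fin n)) ⊆ ω.support := by
    intro x hx
    simp only [Finset.mem_insert, Finset.mem_singleton] at hx
    rcases hx with h | h | h
    · exact h ▸ hmem_a
    · exact h ▸ hmem_wa
    · exact h ▸ hmem_inv
  have hcard3 : ({a, ω a, ω⁻¹ a} : Finset (Fin n)).card = 3 := by
    rw [Finset.card_insert_of_notMem (by simpa [hane] using hainv),
      Finset.card_pair hwainv]
  have hstep1 : ∑ b, (Acnt ω a b : ℝ) = ∑ b ∈ ω.support, (Acnt ω a b : ℝ) := by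
    refine (Finset.sum_subset (Finset.subset_univ _) fun b _ hb => ?_).symm
    rw [Acnt_fix_right ω a b (by simpa using Equiv.Perm.notMem_support.mp hb)]
    push_cast
    ring
  have hsdiff := Finset.sum_sdiff (f := fun b => (Acnt ω a b : ℝ)) htrip_sub
  have htripsum : ∑ b ∈ ({a, ω a, ω⁻¹ a} : Finset (Fin n)), (Acnt ω a b : ℝ)
      = N / 2 + N / 6 + N / 6 := by
    rw [Finset.sum_insert (by simpa [hane] using hainv), Finset.sum_pair hwainv]
    rw [Acnt_diag_real ω a ha,
      Acnt_sixth ω (Acnt_p1 ω a (ω a) hane rfl hk),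
      Acnt_sixth ω (Acnt_p2 ω a (ω⁻¹ a) hainv (ω.apply_symm_apply a)
        (fun h => hk (by rw [h, Equiv.Perm.coe_inv, Equiv.apply_symm_apply])))]
    simp only [hN]
    ring
  have hrest : ∑ b ∈ ω.support \ ({a, ω a, ω⁻¹ a} : Finset (Fin n)), (Acnt ω a b : ℝ)
      = ((ω.support.card : ℝ) - 3) * (N / 4) := by
    have hconst : ∀ b ∈ ω.support \ ({a, ω a, ω⁻¹ a} : Finset (Fin n)),
        (Acnt ω a b : ℝ) = N / 4 := by
      intro b hb
      obtain ⟨hbs, hbp⟩ := Finset.mem_sdiff.mp hb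
      simp only [Finset.mem_insert, Finset.mem_singleton, not_or] at hbp
      have hAq := Acnt_q ω a b (fun h => hbp.1 h.symm) ha (Equiv.Perm.mem_support.mp hbs)
        (fun h => hbp.2.1 h.symm)
        (fun h => hbp.2.2 (by rw [← h, Equiv.Perm.coe_inv, Equiv.symm_apply_apply]))
      have h4 : ((4 * Acnt ω a b : ℕ) : ℝ)
          = (((Finset.univ : Finset (Equiv.Perm (Fin n))).card : ℕ) : ℝ) := by rw [hAq]
      push_cast at h4
      linarith
    rw [Finset.sum_congr rfl hconst, Finset.sum_const, nsmul_eq_mul]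
    congr 1
    rw [Finset.card_sdiff_of_subset htrip_sub, hcard3]
    have h3le : 3 ≤ ω.support.card := by
      calc 3 = ({a, ω a, ω⁻¹ a} : Finset (Fin n)).card := hcard3.symm
        _ ≤ ω.support.card := Finset.card_le_card htrip_sub
    push_cast [Nat.cast_sub h3le]
    ring
  rw [hstep1, ← hsdiff, htripsum, hrest]
  ring

private lemma pow_mem_pair {α : Type*} (σ : Equiv.Perm α) (a : α) (hs : σ (σ a) = a) :
    ∀ i : ℕ, (σ ^ i) a = a ∨ (σ ^ i) a = σ a := by
  intro i
  induction i with
  | zero => left; rfl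
  | succ i ih =>
    rw [pow_succ', Equiv.Perm.mul_apply]
    rcases ih with h | h
    · right; rw [h]
    · left; rw [h, hs]

private lemma card_sq_fixed {α : Type*} [Fintype α] [DecidableEq α] (ω : Equiv.Perm α) :
    (ω.support.filter fun a => ω (ω a) = a).card = 2 * ω.cycleType.count 2 := by
  induction ω using Equiv.Perm.cycle_induction_on with
  | base_one => simp
  | base_cycles σ hσ =>
    by_cases h2 : σ.support.card = 2
    · obtain ⟨x, y, hxy, rfl⟩ := Equiv.Perm.card_support_eq_two.mp h2
      have hsupp : (Equiv.swap x y).support = {x, y} := Equiv.Perm.support_swap hxy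
      rw [hsupp]
      rw [Finset.filter_true_of_mem (fun a _ => Equiv.swap_apply_self x y a)]
      rw [hσ.cycleType, h2]
      simp [Finset.card_pair hxy]
    · have hfil : (σ.support.filter fun a => σ (σ a) = a) = ∅ := by
        rw [Finset.filter_eq_empty_iff]
        intro a ha hsq
        have haa : σ a ≠ a := Equiv.Perm.mem_support.mp ha
        have hsub : σ.support ⊆ {a, σ a} := by
          intro y hy
          obtain ⟨i, hi⟩ := hσ.exists_pow_eq haa (Equiv.Perm.mem_support.mp hy)
          rcases pow_mem_pair σ a hsq i with h | h <;>
            simp [← hi, h]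
        have hsub2 : ({a, σ a} : Finset α) ⊆ σ.support := by
          intro y hy
          simp only [Finset.mem_insert, Finset.mem_singleton] at hy
          rcases hy with rfl | rfl
          · exact ha
          · rw [Equiv.Perm.mem_support, hsq]; exact Ne.symm haa
        have : σ.support.card = 2 := le_antisymm
          ((Finset.card_le_card hsub).trans_eq (Finset.card_pair (Ne.symm haa)))
          (by calc 2 = ({a, σ a} : Finset α).card := (Finset.card_pair (Ne.symm haa)).symm
                _ ≤ σ.support.card := Finset.card_le_card hsub2)
        exact h2 this
      rw [hfil, hσ.cycleType]
      have hne2 : (2 : ℕ) ≠ σ.support.card := fun h => h2 h.symm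
      simp [Multiset.count_singleton, hne2]
  | induction_disjoint σ τ hd hc ihσ ihτ =>
    have hsupp := hd.support_mul
    have hstep : ((σ * τ).support.filter fun a => (σ * τ) ((σ * τ) a) = a)
        = (σ.support.filter fun a => σ (σ a) = a) ∪ (τ.support.filter fun a => τ (τ a) = a) := by
      rw [hsupp, Finset.filter_union]
      congr 1
      · apply Finset.filter_congr
        intro a ha
        have hτa : τ a = a := by
          rcases hd a with h | h
          · exact absurd h (Equiv.Perm.mem_support.mp ha)
          · exact h
        have hτσa' : τ (σ a) = σ a := by
          rcases hd (σ a) with h | h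
          · exact absurd h (by
              intro hcon
              exact (Equiv.Perm.mem_support.mp ha) (σ.injective hcon))
          · exact h
        simp [Equiv.Perm.mul_apply, hτa, hτσa']
      · apply Finset.filter_congr
        intro a ha
        have hσa : σ a = a := by
          rcases hd a with h | h
          · exact h
          · exact absurd h (Equiv.Perm.mem_support.mp ha)
        have hτa2 : σ (τ a) = τ a := by
          rcases hd (τ a) with h | h
          · exact h
          · exact absurd h (by
              intro hcon
              exact (Equiv.Perm.mem_support.mp ha) (τ.injective hcon))
        simp only [Equiv.Perm.mul_apply, hτa2]
        constructor
        · intro h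
          rcases hd (τ (τ a)) with h' | h'
          · rwa [h'] at h
          · exfalso
            have : τ (τ a) = τ a := τ.injective h'
            have : τ a = a := τ.injective this
            exact (Equiv.Perm.mem_support.mp ha) this
        · intro h
          rw [h, hσa]
    have hdisj : Disjoint (σ.support.filter fun a => σ (σ a) = a)
        (τ.support.filter fun a => τ (τ a) = a) :=
      Finset.disjoint_filter_filter hd.disjoint_support
    rw [hstep, Finset.card_union_of_disjoint hdisj, ihσ, ihτ, hd.cycleType_mul,
      Multiset.count_add]
    ring

/-- The number of excedances of a permutation: indices `i` with `ω i > i`. -/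
def exc {n : ℕ} (ω : Equiv.Perm (Fin n)) : ℕ :=
  (Finset.univ.filter fun i : Fin n => i < ω i).card

private lemma exc_real (τ : Equiv.Perm (Fin n)) :
    (exc τ : ℝ) = ∑ i, (if i < τ i then (1 : ℝ) else 0) := by
  unfold exc
  rw [Finset.card_filter]
  push_cast
  exact Finset.sum_congr rfl fun i _ => by split_ifs <;> simp

private lemma exc_conj_real (ω σ : Equiv.Perm (Fin n)) :
    (exc (σ * ω * σ⁻¹) : ℝ) = ∑ a, (if σ a < σ (ω a) then (1 : ℝ) else 0) := by
  rw [exc_real]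
  have h : ∀ a : Fin n, (if σ a < σ (ω a) then (1:ℝ) else 0)
      = (fun i => if i < (σ * ω * σ⁻¹) i then (1:ℝ) else 0) (σ a) := by
    intro a
    simp [Equiv.Perm.mul_apply]
  rw [show (∑ a, (if σ a < σ (ω a) then (1:ℝ) else 0))
      = ∑ a, (fun i => if i < (σ * ω * σ⁻¹) i then (1:ℝ) else 0) (σ a) from
    Finset.sum_congr rfl fun a _ => h a]
  exact (Equiv.sum_comp σ _).symm

private lemma sum_sq_conj (ω : Equiv.Perm (Fin n)) :
    ∑ σ : Equiv.Perm (Fin n), (exc (σ * ω * σ⁻¹) : ℝ) ^ 2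
      = ∑ a, ∑ b, (Acnt ω a b : ℝ) := by
  have h1 : ∀ σ : Equiv.Perm (Fin n), (exc (σ * ω * σ⁻¹) : ℝ)^2
      = ∑ a, ∑ b, (if σ a < σ (ω a) ∧ σ b < σ (ω b) then (1:ℝ) else 0) := by
    intro σ
    rw [exc_conj_real, sq, Finset.sum_mul_sum]
    refine Finset.sum_congr rfl fun a _ => Finset.sum_congr rfl fun b _ => ?_
    by_cases hp : σ a < σ (ω a) <;> by_cases hq : σ b < σ (ω b) <;> simp [hp, hq]
  rw [Finset.sum_congr rfl fun σ _ => h1 σ]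
  rw [Finset.sum_comm]
  refine Finset.sum_congr rfl fun a _ => ?_
  rw [Finset.sum_comm]
  refine Finset.sum_congr rfl fun b _ => ?_
  rw [Finset.sum_boole]
  rfl

private lemma sum_fst_conj (ω : Equiv.Perm (Fin n)) :
    ∑ σ : Equiv.Perm (Fin n), (exc (σ * ω * σ⁻¹) : ℝ)
      = (ω.support.card : ℝ)
        * (((Finset.univ : Finset (Equiv.Perm (Fin n))).card : ℝ) / 2) := by
  rw [Finset.sum_congr rfl fun σ _ => exc_conj_real ω σ]
  rw [Finset.sum_comm]
  have hterm : ∀ a : Fin n,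
      (∑ σ : Equiv.Perm (Fin n), if σ a < σ (ω a) then (1:ℝ) else 0)
        = if ω a = a then 0
          else ((Finset.univ : Finset (Equiv.Perm (Fin n))).card : ℝ) / 2 := by
    intro a
    rw [Finset.sum_boole]
    by_cases ha : ω a = a
    · simp only [ha, if_true]
      rw [show (Finset.univ.filter fun σ : Equiv.Perm (Fin n) => σ a < σ a) = ∅ by
        rw [Finset.filter_eq_empty_iff]; exact fun σ _ => lt_irrefl _]
      simp
    · simp only [ha, if_false]
      have := L2 a (ω a) (Ne.symm ha)
      have h3 : ((2 * (Finset.univ.filter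
          fun σ : Equiv.Perm (Fin n) => σ a < σ (ω a)).card : ℕ) : ℝ)
          = (((Finset.univ : Finset (Equiv.Perm (Fin n))).card : ℕ) : ℝ) := by rw [this]
      push_cast at h3
      linarith
  rw [Finset.sum_congr rfl fun a _ => hterm a]
  rw [Finset.sum_ite, Finset.sum_const, Finset.sum_const]
  simp only [smul_zero, zero_add, nsmul_eq_mul]
  rfl

private lemma total_Acnt (ω : Equiv.Perm (Fin n)) :
    ∑ a, ∑ b, (Acnt ω a b : ℝ)
      = ((ω.support.filter fun a => ω (ω a) = a).card : ℝ)
          * (((Finset.univ : Finset (Equiv.Perm (Fin n))).card : ℝ) / 2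
            + ((ω.support.card : ℝ) - 2)
              * (((Finset.univ : Finset (Equiv.Perm (Fin n))).card : ℝ) / 4))
        + ((ω.support.filter fun a => ¬ ω (ω a) = a).card : ℝ)
          * (((Finset.univ : Finset (Equiv.Perm (Fin n))).card : ℝ) / 2
            + ((Finset.univ : Finset (Equiv.Perm (Fin n))).card : ℝ) / 3
            + ((ω.support.card : ℝ) - 3)
              * (((Finset.univ : Finset (Equiv.Perm (Fin n))).card : ℝ) / 4)) := by
  have hstep1 : ∑ a, ∑ b, (Acnt ω a b : ℝ) = ∑ a ∈ ω.support, ∑ b, (Acnt ω a b : ℝ) := by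
    refine (Finset.sum_subset (Finset.subset_univ _) fun a _ ha => ?_).symm
    refine Finset.sum_eq_zero fun b _ => ?_
    rw [Acnt_fix_left ω a b (by simpa using Equiv.Perm.notMem_support.mp ha)]
    push_cast
    ring
  rw [hstep1, ← Finset.sum_filter_add_sum_filter_not ω.support (fun a => ω (ω a) = a)]
  congr 1
  · rw [Finset.sum_congr rfl (fun a ha => ?_), Finset.sum_const, nsmul_eq_mul]
    obtain ⟨has, hap⟩ := Finset.mem_filter.mp ha
    exact row_sum_s ω a (Equiv.Perm.mem_support.mp has) hap
  · rw [Finset.sum_congr rfl (fun a ha => ?_), Finset.sum_const, nsmul_eq_mul]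
    obtain ⟨has, hap⟩ := Finset.mem_filter.mp ha
    exact row_sum_k ω a (Equiv.Perm.mem_support.mp has) hap

private lemma conj_sum (lam : n.Partition) (σ : Equiv.Perm (Fin n))
    (f : Equiv.Perm (Fin n) → ℝ) :
    ∑ ω ∈ conjClass n lam, f (σ * ω * σ⁻¹) = ∑ ω ∈ conjClass n lam, f ω := by
  refine Finset.sum_nbij' (i := fun ω => σ * ω * σ⁻¹) (j := fun ω => σ⁻¹ * ω * σ)
    ?_ ?_ ?_ ?_ ?_
  · intro ω hω
    rw [conjClass, Finset.mem_filter] at hω ⊢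
    exact ⟨Finset.mem_univ _, by rw [Equiv.Perm.cycleType_conj]; exact hω.2⟩
  · intro ω hω
    rw [conjClass, Finset.mem_filter] at hω ⊢
    refine ⟨Finset.mem_univ _, ?_⟩
    show (σ⁻¹ * ω * σ).cycleType = _
    rw [show σ⁻¹ * ω * σ = σ⁻¹ * ω * σ⁻¹⁻¹ by group, Equiv.Perm.cycleType_conj]
    exact hω.2
  · intro ω _
    group
  · intro ω _
    group
  · intro ω _
    rfl

theorem stmt14 (n : ℕ) (hn : 3 ≤ n) (lam : n.Partition) (a1 a2 : ℕ)
    (ha1 : a1 = Multiset.count 1 lam.parts) (ha2 : a2 = Multiset.count 2 lam.parts) :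
    (∑ ω ∈ conjClass n lam, (exc ω : ℝ) ^ 2) / ((conjClass n lam).card : ℝ)
      = ((n : ℝ) - (a1 : ℝ)) ^ 2 / 4 + ((n : ℝ) - (a1 : ℝ)) / 4
        - ((n : ℝ) - (a1 : ℝ) + (a2 : ℝ)) / 6 ∧
    (∑ ω ∈ conjClass n lam, (exc ω : ℝ) ^ 2) / ((conjClass n lam).card : ℝ)
        - ((∑ ω ∈ conjClass n lam, (exc ω : ℝ)) / ((conjClass n lam).card : ℝ)) ^ 2
      = ((n : ℝ) - (a1 : ℝ) - 2 * (a2 : ℝ)) / 12 := by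
  classical
  set C := conjClass n lam with hC
  set P := Multiset.filter (fun i => i ≠ 1) lam.parts with hP
  set M : ℕ := P.sum with hM
  set N : ℕ := (Finset.univ : Finset (Equiv.Perm (Fin n))).card with hN
  -- partition counting facts
  have hpartsum : lam.parts.sum = n := lam.parts_sum
  have hones : (Multiset.filter (fun i => i = 1) lam.parts).sum = a1 := by
    have he : Multiset.filter (fun i => i = 1) lam.parts
        = Multiset.replicate (Multiset.count 1 lam.parts) 1 :=
      Multiset.filter_eq' lam.parts 1
    rw [he, Multiset.sum_replicate, smul_eq_mul, mul_one, ha1]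
  have ha1M : a1 + M = n := by
    have h := Multiset.filter_add_not (fun i => i = 1) lam.parts
    have h2 := congrArg Multiset.sum h
    rw [Multiset.sum_add, hones, hpartsum] at h2
    rw [hM, hP]
    convert h2 using 3
  -- per-element facts
  have hmemC : ∀ ω ∈ C, ω.cycleType = P := fun ω hω => (Finset.mem_filter.mp hω).2
  have hsupp : ∀ ω ∈ C, ω.support.card = M := fun ω hω => by
    rw [← Equiv.Perm.sum_cycleType, hmemC ω hω]
  have hs2 : ∀ ω ∈ C, (ω.support.filter fun a => ω (ω a) = a).card = 2 * a2 := by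
    intro ω hω
    rw [card_sq_fixed, hmemC ω hω, hP, Multiset.count_filter]
    simp [ha2]
  have hkk : ∀ ω ∈ C, ((ω.support.filter fun a => ¬ ω (ω a) = a).card : ℝ)
      = (M : ℝ) - 2 * (a2 : ℝ) := by
    intro ω hω
    have h := Finset.card_filter_add_card_filter_not
      (s := ω.support) (p := fun a => ω (ω a) = a)
    rw [hs2 ω hω, hsupp ω hω] at h
    have h2 : ((2 * a2 + (ω.support.filter fun a => ¬ ω (ω a) = a).card : ℕ) : ℝ)
        = ((M : ℕ) : ℝ) := by rw [h]
    push_cast at h2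
    linarith
  -- nonemptiness
  have hex : ∃ g : Equiv.Perm (Fin n), g.cycleType = P := by
    rw [Equiv.Perm.exists_with_cycleType_iff]
    constructor
    · rw [Fintype.card_fin]
      omega
    · intro x hx
      obtain ⟨hmem, hne⟩ := Multiset.mem_filter.mp (hP ▸ hx)
      have := lam.parts_pos hmem
      omega
  obtain ⟨g, hg⟩ := hex
  have hCne : C.Nonempty := ⟨g, Finset.mem_filter.mpr ⟨Finset.mem_univ _, hg⟩⟩
  have hcpos : (0 : ℝ) < (C.card : ℝ) := by
    exact_mod_cast Finset.card_pos.mpr hCne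
  have hNpos : (0 : ℝ) < (N : ℝ) := by
    exact_mod_cast Finset.card_pos.mpr ⟨1, Finset.mem_univ _⟩
  have hMr : (M : ℝ) = (n : ℝ) - (a1 : ℝ) := by
    have : ((a1 + M : ℕ) : ℝ) = (n : ℝ) := by rw [ha1M]
    push_cast at this
    linarith
  -- second moment sum
  have hmain2 : (N : ℝ) * (∑ ω ∈ C, (exc ω : ℝ) ^ 2)
      = (C.card : ℝ) * ((2 * (a2:ℝ)) * ((N:ℝ)/2 + ((M:ℝ)-2)*((N:ℝ)/4))
          + ((M:ℝ) - 2*(a2:ℝ)) * ((N:ℝ)/2 + (N:ℝ)/3 + ((M:ℝ)-3)*((N:ℝ)/4))) := by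
    calc (N : ℝ) * (∑ ω ∈ C, (exc ω : ℝ) ^ 2)
        = ∑ σ : Equiv.Perm (Fin n), ∑ ω ∈ C, (exc ω : ℝ) ^ 2 := by
          rw [Finset.sum_const, nsmul_eq_mul]
      _ = ∑ σ : Equiv.Perm (Fin n), ∑ ω ∈ C, (exc (σ * ω * σ⁻¹) : ℝ) ^ 2 :=
          Finset.sum_congr rfl fun σ _ =>
            (conj_sum lam σ (fun ω => (exc ω : ℝ) ^ 2)).symm
      _ = ∑ ω ∈ C, ∑ σ : Equiv.Perm (Fin n), (exc (σ * ω * σ⁻¹) : ℝ) ^ 2 :=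
          Finset.sum_comm
      _ = ∑ ω ∈ C, ((2 * (a2:ℝ)) * ((N:ℝ)/2 + ((M:ℝ)-2)*((N:ℝ)/4))
          + ((M:ℝ) - 2*(a2:ℝ)) * ((N:ℝ)/2 + (N:ℝ)/3 + ((M:ℝ)-3)*((N:ℝ)/4))) := by
          refine Finset.sum_congr rfl fun ω hω => ?_
          rw [sum_sq_conj ω, total_Acnt ω, hkk ω hω, hs2 ω hω, hsupp ω hω]
          push_cast
          ring
      _ = (C.card : ℝ) * _ := by rw [Finset.sum_const, nsmul_eq_mul]
  -- first moment sum
  have hmain1 : (N : ℝ) * (∑ ω ∈ C, (exc ω : ℝ))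
      = (C.card : ℝ) * ((M:ℝ) * ((N:ℝ)/2)) := by
    calc (N : ℝ) * (∑ ω ∈ C, (exc ω : ℝ))
        = ∑ σ : Equiv.Perm (Fin n), ∑ ω ∈ C, (exc ω : ℝ) := by
          rw [Finset.sum_const, nsmul_eq_mul]
      _ = ∑ σ : Equiv.Perm (Fin n), ∑ ω ∈ C, (exc (σ * ω * σ⁻¹) : ℝ) :=
          Finset.sum_congr rfl fun σ _ =>
            (conj_sum lam σ (fun ω => (exc ω : ℝ))).symm
      _ = ∑ ω ∈ C, ∑ σ : Equiv.Perm (Fin n), (exc (σ * ω * σ⁻¹) : ℝ) :=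
          Finset.sum_comm
      _ = ∑ ω ∈ C, ((M:ℝ) * ((N:ℝ)/2)) := by
          refine Finset.sum_congr rfl fun ω hω => ?_
          rw [sum_fst_conj ω, hsupp ω hω]
      _ = (C.card : ℝ) * _ := by rw [Finset.sum_const, nsmul_eq_mul]
  have hE2 : (∑ ω ∈ C, (exc ω : ℝ) ^ 2) / ((C.card) : ℝ)
      = ((n : ℝ) - (a1 : ℝ)) ^ 2 / 4 + ((n : ℝ) - (a1 : ℝ)) / 4
        - ((n : ℝ) - (a1 : ℝ) + (a2 : ℝ)) / 6 := by
    rw [div_eq_iff hcpos.ne']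
    apply mul_left_cancel₀ hNpos.ne'
    rw [hmain2, ← hMr]
    ring
  have hE1 : (∑ ω ∈ C, (exc ω : ℝ)) / ((C.card) : ℝ) = (M : ℝ) / 2 := by
    rw [div_eq_iff hcpos.ne']
    apply mul_left_cancel₀ hNpos.ne'
    rw [hmain1]
    ring
  refine ⟨hE2, ?_⟩
  rw [hE2, hE1, hMr]
  ring
end

section
/- Fix m ≥ 1 and k ≥ 1. Let X be a permutation statistic on S_n realizable over a constraint set of size m, i.e., X = Σ_{K∈𝒞} wt(K)·I_K for some finite collection 𝒞 of permutation constraints each of cardinality at most m and real weights wt(K), where I_K(ω) = 1 if ω satisfies K and 0 otherwise. Then for any two partitions λ and μ of n all of whose parts have size at least mk+1, the k-th moments of X over the corresponding conjugacy classes agree: (Σ_{ω∈C_λ} X(ω)^k)/|C_λ| = (Σ_{ω∈C_μ} X(ω)^k)/|C_μ|. -/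
namespace Stmt17
open Finset Equiv Equiv.Perm
variable {n : ℕ}
noncomputable def Ncnt (n : ℕ) (lam : n.Partition) (K : Finset (Fin n × Fin n)) : ℕ :=
  ((conjClass n lam).filter fun ω => ∀ p ∈ K, ω p.1 = p.2).card
def Vset (K : Finset (Fin n × Fin n)) : Finset (Fin n) :=
  K.image Prod.fst ∪ K.image Prod.snd
def HasCyc (K : Finset (Fin n × Fin n)) : Prop :=
  ∃ (g : Fin n → Fin n) (a : Fin n) (d : ℕ),
    0 < d ∧ g^[d] a = a ∧ ∀ i < d, (g^[i] a, g^[i + 1] a) ∈ K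
lemma mem_conjClass {lam : n.Partition} {ω : Equiv.Perm (Fin n)} :
    ω ∈ conjClass n lam ↔ ω.cycleType = Multiset.filter (fun i => i ≠ 1) lam.parts := by
  simp [conjClass]
lemma parts_filter {c : ℕ} (lam : n.Partition) (hlam : ∀ p ∈ lam.parts, c + 1 ≤ p)
    (hc : 1 ≤ c) : Multiset.filter (fun i => i ≠ 1) lam.parts = lam.parts :=
  Multiset.filter_eq_self.mpr fun p hp => by have := hlam p hp; omega
lemma no_fix {c : ℕ} {lam : n.Partition} (hlam : ∀ p ∈ lam.parts, c + 1 ≤ p) (hc : 1 ≤ c)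
    {ω : Equiv.Perm (Fin n)} (hω : ω ∈ conjClass n lam) (x : Fin n) : ω x ≠ x := by
  have h1 := Equiv.Perm.sum_cycleType ω
  rw [mem_conjClass.mp hω, parts_filter lam hlam hc, lam.parts_sum] at h1
  have : ω.support = Finset.univ := by
    apply Finset.eq_univ_of_card
    rw [← h1, Fintype.card_fin]
  have hx : x ∈ ω.support := this ▸ Finset.mem_univ x
  exact Equiv.Perm.mem_support.mp hx
lemma cyc_len_mem {ω : Equiv.Perm (Fin n)}
    {x : Fin n} (hx : ω x ≠ x) : (ω.cycleOf x).support.card ∈ ω.cycleType := by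
  rw [Equiv.Perm.cycleType_def]
  exact Multiset.mem_map.mpr ⟨ω.cycleOf x,
    Finset.mem_val.mpr ((Equiv.Perm.cycleOf_mem_cycleFactorsFinset_iff).mpr (Equiv.Perm.mem_support.mpr hx)), rfl⟩

-- NEW PART

lemma ncnt_zero_of_noninj {lam : n.Partition} {K : Finset (Fin n × Fin n)} {a a' b : Fin n}
    (h1 : (a, b) ∈ K) (h2 : (a', b) ∈ K) (hne : a ≠ a') : Ncnt n lam K = 0 := by
  rw [Ncnt, Finset.card_eq_zero, Finset.filter_eq_empty_iff]
  intro ω _ hsat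
  exact hne (ω.injective (((hsat _ h1).trans (hsat _ h2).symm)))

lemma ncnt_zero_of_cyc {c : ℕ} (hc : 1 ≤ c) {lam : n.Partition}
    (hlam : ∀ p ∈ lam.parts, c + 1 ≤ p) {K : Finset (Fin n × Fin n)} (hK : K.card ≤ c)
    (hcyc : HasCyc K) : Ncnt n lam K = 0 := by
  obtain ⟨g, a, d, hd, hret, harc⟩ := hcyc
  rw [Ncnt, Finset.card_eq_zero, Finset.filter_eq_empty_iff]
  intro ω hω hsat
  have hstep : ∀ i < d, ω (g^[i] a) = g^[i + 1] a := fun i hi => hsat _ (harc i hi)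
  have horb : ∀ j : ℕ, (ω ^ j) a = g^[j % d] a := by
    intro j
    induction j with
    | zero => simp [Nat.zero_mod]
    | succ j ih =>
      have hlt : j % d < d := Nat.mod_lt _ hd
      have hpow : (ω ^ (j + 1)) a = ω ((ω ^ j) a) := by
        rw [pow_succ', Equiv.Perm.mul_apply]
      rw [hpow, ih, hstep _ hlt]
      by_cases h : j % d + 1 = d
      · have hdm := Nat.div_add_mod j d
        have hdvd : d ∣ (j + 1) := ⟨j / d + 1, by rw [Nat.mul_add, Nat.mul_one]; omega⟩
        have h0 : (j + 1) % d = 0 := Nat.mod_eq_zero_of_dvd hdvd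
        rw [h, hret, h0]
        simp
      · have h2 : j % d + 1 < d := by omega
        have h1 : (j + 1) % d = j % d + 1 := by
          rw [Nat.add_mod, Nat.mod_eq_of_lt (by omega : 1 < d), Nat.mod_eq_of_lt h2]
        rw [h1]
  set S := (Finset.range d).image (fun i => g^[i] a) with hS
  have hSsub : S ⊆ K.image Prod.fst := by
    intro y hy
    obtain ⟨i, hi, rfl⟩ := Finset.mem_image.mp hy
    exact Finset.mem_image.mpr ⟨_, harc i (Finset.mem_range.mp hi), rfl⟩
  have hSorb : (ω.cycleOf a).support ⊆ S := by
    intro y hy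
    rw [Equiv.Perm.mem_support_cycleOf_iff] at hy
    obtain ⟨i, -, rfl⟩ := hy.1.exists_pow_eq'
    rw [horb]
    exact Finset.mem_image.mpr ⟨i % d, Finset.mem_range.mpr (Nat.mod_lt _ hd), rfl⟩
  have hfix : ω a ≠ a := no_fix hlam hc hω a
  have hmem := cyc_len_mem hfix
  rw [mem_conjClass.mp hω, parts_filter lam hlam hc] at hmem
  have h1 : c + 1 ≤ (ω.cycleOf a).support.card := hlam _ hmem
  have h2 : (ω.cycleOf a).support.card ≤ K.card :=
    le_trans (Finset.card_le_card hSorb)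
      (le_trans (Finset.card_le_card hSsub) Finset.card_image_le)
  omega

lemma ncnt_conj {lam : n.Partition} (σ : Equiv.Perm (Fin n)) (K : Finset (Fin n × Fin n)) :
    Ncnt n lam (K.image fun p => (σ p.1, σ p.2)) = Ncnt n lam K := by
  unfold Ncnt
  apply Finset.card_bij' (i := fun ω _ => σ⁻¹ * ω * σ) (j := fun ω _ => σ * ω * σ⁻¹)
  · intro ω hω
    simp only [Finset.mem_filter] at hω ⊢
    constructor
    · rw [mem_conjClass] at *
      rw [← hω.1]
      have : σ⁻¹ * ω * σ = σ⁻¹ * ω * σ⁻¹⁻¹ := by simp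
      rw [this, Equiv.Perm.cycleType_conj]
    · intro p hp
      have := hω.2 (σ p.1, σ p.2) (Finset.mem_image_of_mem _ hp)
      simp only [Equiv.Perm.mul_apply] at *
      simp [this]
  · intro ω hω
    simp only [Finset.mem_filter] at hω ⊢
    constructor
    · rw [mem_conjClass] at *
      rw [← hω.1, Equiv.Perm.cycleType_conj]
    · intro p hp
      obtain ⟨q, hq, rfl⟩ := Finset.mem_image.mp hp
      have := hω.2 q hq
      simp only [Equiv.Perm.mul_apply] at *
      simp [this]
  · intro ω _; simp [mul_assoc]
  · intro ω _; simp [mul_assoc]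

lemma ncnt_rec (lam : n.Partition) (T : Finset (Fin n × Fin n)) (x : Fin n) :
    Ncnt n lam T = ∑ j : Fin n, Ncnt n lam (insert (x, j) T) := by
  unfold Ncnt
  rw [Finset.card_eq_sum_card_fiberwise
    (f := fun ω : Equiv.Perm (Fin n) => ω x) (t := Finset.univ) (fun _ _ => Finset.mem_univ _)]
  apply Finset.sum_congr rfl
  intro j _
  congr 1
  rw [Finset.filter_filter]
  apply Finset.filter_congr
  intro ω _
  simp only [Finset.forall_mem_insert]
  tauto


def FFunc {n : ℕ} (K : Finset (Fin n × Fin n)) : Prop :=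
  ∀ a b b' : Fin n, (a, b) ∈ K → (a, b') ∈ K → b = b'

def IInj {n : ℕ} (K : Finset (Fin n × Fin n)) : Prop :=
  ∀ a a' b : Fin n, (a, b) ∈ K → (a', b) ∈ K → a = a'

lemma exists_sink (K : Finset (Fin n × Fin n)) (hnc : ¬ HasCyc K) (hne : K.Nonempty) :
    ∃ q ∈ K, q.2 ∉ K.image Prod.fst := by
  by_contra hcon
  push_neg at hcon
  classical
  set g : Fin n → Fin n := fun a => if h : ∃ b, (a, b) ∈ K then h.choose else a with hg
  have hgarc : ∀ a : Fin n, (∃ b, (a, b) ∈ K) → (a, g a) ∈ K := by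
    intro a ha
    simp only [hg, dif_pos ha]
    exact ha.choose_spec
  obtain ⟨⟨a₀, b₀⟩, hab⟩ := hne
  have hsrc : ∀ i : ℕ, ∃ b, (g^[i] a₀, b) ∈ K := by
    intro i
    induction i with
    | zero => exact ⟨b₀, hab⟩
    | succ i ih =>
      have harc : (g^[i] a₀, g^[i + 1] a₀) ∈ K := by
        rw [Function.iterate_succ_apply']
        exact hgarc _ ih
      have := hcon _ harc
      simpa [Finset.mem_image] using this
  have hpig : ∃ i ∈ Finset.range (n + 1), ∃ j ∈ Finset.range (n + 1),
      i ≠ j ∧ g^[i] a₀ = g^[j] a₀ := by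
    apply Finset.exists_ne_map_eq_of_card_lt_of_maps_to (t := (Finset.univ : Finset (Fin n)))
    · simp
    · intro i _
      exact Finset.mem_univ _
  obtain ⟨i, -, j, -, hij, heq⟩ := hpig
  -- wlog i < j
  rcases Nat.lt_or_ge i j with hlt | hge
  all_goals {
    first
    | (apply hnc
       refine ⟨g, g^[i] a₀, j - i, by omega, ?_, ?_⟩
       · rw [← Function.iterate_add_apply]
         rw [show j - i + i = j by omega]
         exact heq.symm
       · intro r hr
         have h1 : g^[r] (g^[i] a₀) = g^[r + i] a₀ := (Function.iterate_add_apply g r i a₀).symm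
         have h2 : g^[r + 1] (g^[i] a₀) = g^[r + 1 + i] a₀ := (Function.iterate_add_apply g (r+1) i a₀).symm
         rw [h1, h2, show r + 1 + i = (r + i) + 1 from by omega, Function.iterate_succ_apply']
         exact hgarc _ (hsrc (r + i)))
    | (apply hnc
       refine ⟨g, g^[j] a₀, i - j, by omega, ?_, ?_⟩
       · rw [← Function.iterate_add_apply]
         rw [show i - j + j = i by omega]
         exact heq
       · intro r hr
         have h1 : g^[r] (g^[j] a₀) = g^[r + j] a₀ := (Function.iterate_add_apply g r j a₀).symm
         have h2 : g^[r + 1] (g^[j] a₀) = g^[r + 1 + j] a₀ := (Function.iterate_add_apply g (r+1) j a₀).symm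
         rw [h1, h2, show r + 1 + j = (r + j) + 1 from by omega, Function.iterate_succ_apply']
         exact hgarc _ (hsrc (r + j)))
  }


lemma Vset_insert (a b : Fin n) (S : Finset (Fin n × Fin n)) :
    Vset (insert (a, b) S) = insert a (insert b (Vset S)) := by
  show (insert (a,b) S).image Prod.fst ∪ (insert (a,b) S).image Prod.snd = _
  rw [Finset.image_insert, Finset.image_insert, Finset.insert_union, Finset.union_insert]
  rfl

lemma key (c : ℕ) (hc : 1 ≤ c) (lam mu : n.Partition)
    (hlam : ∀ p ∈ lam.parts, c + 1 ≤ p) (hmu : ∀ p ∈ mu.parts, c + 1 ≤ p) :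
    ∀ t v (K : Finset (Fin n × Fin n)), K.card = t → (Vset K).card = v →
      FFunc K → IInj K → ¬ HasCyc K → t ≤ c →
      Ncnt n lam K * (conjClass n mu).card = Ncnt n mu K * (conjClass n lam).card := by
  intro t
  induction t using Nat.strong_induction_on with
  | _ t IHt =>
  intro v
  induction v using Nat.strong_induction_on with
  | _ v IHv =>
  intro K hKt hKv hF hI hNC htc
  rcases K.eq_empty_or_nonempty with rfl | hne
  · have h1 : Ncnt n lam ∅ = (conjClass n lam).card := by
      unfold Ncnt
      rw [Finset.filter_true_of_mem (fun ω _ => by simp)]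
    have h2 : Ncnt n mu ∅ = (conjClass n mu).card := by
      unfold Ncnt
      rw [Finset.filter_true_of_mem (fun ω _ => by simp)]
    rw [h1, h2, Nat.mul_comm]
  obtain ⟨⟨x, w⟩, hxw, hwsink⟩ := exists_sink K hNC hne
  simp only at hwsink
  set T := K.erase (x, w) with hTdef
  have hTsub : T ⊆ K := Finset.erase_subset _ _
  have hxwT : (x, w) ∉ T := Finset.notMem_erase _ _
  have hKinsert : insert (x, w) T = K := Finset.insert_erase hxw
  have hxT : ∀ j, (x, j) ∉ T := by
    intro j hj
    have hwj : w = j := hF x w j hxw (hTsub hj)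
    rw [← hwj] at hj
    exact hxwT hj
  have hwx : w ≠ x := by
    intro h
    apply hNC
    refine ⟨fun _ => x, x, 1, Nat.one_pos, rfl, ?_⟩
    intro i hi
    interval_cases i
    simpa [← h] using hxw
  have hwVT : w ∉ Vset T := by
    rw [Vset, Finset.mem_union]
    rintro (h | h)
    · rw [Finset.mem_image] at h
      obtain ⟨q, hq, h2⟩ := h
      exact hwsink (Finset.mem_image.mpr ⟨q, hTsub hq, h2⟩)
    · rw [Finset.mem_image] at h
      obtain ⟨⟨a, b⟩, hq, h2⟩ := h
      simp only at h2
      have hq' : (a, w) ∈ T := h2 ▸ hq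
      have hax : a = x := hI a x w (hTsub hq') hxw
      rw [hax] at hq'
      exact hxwT hq'
  have hxVK : x ∈ Vset K := Finset.mem_union_left _ (Finset.mem_image.mpr ⟨(x, w), hxw, rfl⟩)
  have hwVK : w ∈ Vset K := Finset.mem_union_right _ (Finset.mem_image.mpr ⟨(x, w), hxw, rfl⟩)
  have hVTK : Vset T ⊆ Vset K :=
    Finset.union_subset_union (Finset.image_subset_image hTsub) (Finset.image_subset_image hTsub)
  have ht1 : 1 ≤ t := by rw [← hKt]; exact Finset.card_pos.mpr hne
  have hTcard : T.card = t - 1 := by rw [hTdef, Finset.card_erase_of_mem hxw, hKt]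
  have hTins_card : ∀ j, (insert (x, j) T).card = t := by
    intro j
    rw [Finset.card_insert_of_notMem (hxT j), hTcard]
    omega
  have hFT : FFunc T := fun a b b' h1 h2 => hF a b b' (hTsub h1) (hTsub h2)
  have hIT : IInj T := fun a a' b h1 h2 => hI a a' b (hTsub h1) (hTsub h2)
  have hNCT : ¬ HasCyc T := by
    rintro ⟨g, a, d, hd, hret, harc⟩
    exact hNC ⟨g, a, d, hd, hret, fun i hi => hTsub (harc i hi)⟩
  -- fresh targets give the same count as K itself
  have hfreshN : ∀ (nu : n.Partition) (j : Fin n), j ∉ Vset T → j ≠ x →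
      Ncnt n nu (insert (x, j) T) = Ncnt n nu K := by
    intro nu j hjVT hjx
    rcases eq_or_ne j w with rfl | hjw
    · rw [hKinsert]
    · have himg : ((insert (x, w) T).image fun p => (Equiv.swap w j p.1, Equiv.swap w j p.2))
          = insert (x, j) T := by
        rw [Finset.image_insert]
        have h1 : Equiv.swap w j x = x :=
          Equiv.swap_apply_of_ne_of_ne (Ne.symm hwx) (Ne.symm hjx)
        have h2 : Equiv.swap w j w = j := Equiv.swap_apply_left _ _
        have h3 : T.image (fun p => (Equiv.swap w j p.1, Equiv.swap w j p.2)) = T := by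
          rw [Finset.image_congr (g := id), Finset.image_id]
          intro p hp
          have hp1 : p.1 ∈ Vset T :=
            Finset.mem_union_left _ (Finset.mem_image_of_mem _ hp)
          have hp2 : p.2 ∈ Vset T :=
            Finset.mem_union_right _ (Finset.mem_image_of_mem _ hp)
          have e1 : Equiv.swap w j p.1 = p.1 :=
            Equiv.swap_apply_of_ne_of_ne (fun h => hwVT (h ▸ hp1)) (fun h => hjVT (h ▸ hp1))
          have e2 : Equiv.swap w j p.2 = p.2 :=
            Equiv.swap_apply_of_ne_of_ne (fun h => hwVT (h ▸ hp2)) (fun h => hjVT (h ▸ hp2))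
          show (Equiv.swap w j p.1, Equiv.swap w j p.2) = p
          rw [e1, e2]
        simp only [h1, h2, h3]
      calc Ncnt n nu (insert (x, j) T)
          = Ncnt n nu (insert (x, w) T) := by rw [← himg, ncnt_conj]
        _ = Ncnt n nu K := by rw [hKinsert]
  -- non-fresh targets satisfy the cross identity
  have hcross : ∀ j ∈ Finset.univ.filter (fun j : Fin n => ¬(j ∉ Vset T ∧ j ≠ x)),
      Ncnt n lam (insert (x, j) T) * (conjClass n mu).card
        = Ncnt n mu (insert (x, j) T) * (conjClass n lam).card := by
    intro j hj
    have hj' : j ∈ Vset T ∨ j = x := by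
      rw [Finset.mem_filter] at hj
      tauto
    have hcardle : (insert (x, j) T).card ≤ c := le_trans (le_of_eq (hTins_card j)) htc
    by_cases hjx : j = x
    · subst hjx
      have hcyc : HasCyc (insert (j, j) T) := by
        refine ⟨fun _ => j, j, 1, Nat.one_pos, rfl, ?_⟩
        intro i hi
        interval_cases i
        exact Finset.mem_insert_self _ _
      rw [ncnt_zero_of_cyc hc hlam hcardle hcyc, ncnt_zero_of_cyc hc hmu hcardle hcyc,
        Nat.zero_mul, Nat.zero_mul]
    · have hjV : j ∈ Vset T := hj'.resolve_right hjx
      by_cases hjs : j ∈ T.image Prod.snd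
      · obtain ⟨⟨y, b⟩, hyT, hb⟩ := Finset.mem_image.mp hjs
        simp only at hb
        have hyT' : (y, j) ∈ T := hb ▸ hyT
        have hxy : x ≠ y := fun h => hxT j (h ▸ hyT')
        rw [ncnt_zero_of_noninj (Finset.mem_insert_self _ _) (Finset.mem_insert_of_mem hyT') hxy,
          ncnt_zero_of_noninj (Finset.mem_insert_self _ _) (Finset.mem_insert_of_mem hyT') hxy,
          Nat.zero_mul, Nat.zero_mul]
      · by_cases hcyc : HasCyc (insert (x, j) T)
        · rw [ncnt_zero_of_cyc hc hlam hcardle hcyc, ncnt_zero_of_cyc hc hmu hcardle hcyc,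
            Nat.zero_mul, Nat.zero_mul]
        · have hF' : FFunc (insert (x, j) T) := by
            intro a b b' h1 h2
            rcases Finset.mem_insert.mp h1 with e1 | h1'
            · rcases Finset.mem_insert.mp h2 with e2 | h2'
              · rw [Prod.mk.injEq] at e1 e2
                rw [e1.2, e2.2]
              · rw [Prod.mk.injEq] at e1
                rw [e1.1] at h2'
                exact absurd h2' (hxT b')
            · rcases Finset.mem_insert.mp h2 with e2 | h2'
              · rw [Prod.mk.injEq] at e2
                rw [e2.1] at h1'
                exact absurd h1' (hxT b)
              · exact hFT a b b' h1' h2'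
          have hI' : IInj (insert (x, j) T) := by
            intro a a' b h1 h2
            rcases Finset.mem_insert.mp h1 with e1 | h1'
            · rcases Finset.mem_insert.mp h2 with e2 | h2'
              · rw [Prod.mk.injEq] at e1 e2
                rw [e1.1, e2.1]
              · rw [Prod.mk.injEq] at e1
                rw [e1.2] at h2'
                exact absurd (Finset.mem_image_of_mem Prod.snd h2') hjs
            · rcases Finset.mem_insert.mp h2 with e2 | h2'
              · rw [Prod.mk.injEq] at e2
                rw [e2.2] at h1'
                exact absurd (Finset.mem_image_of_mem Prod.snd h1') hjs
              · exact hIT a a' b h1' h2'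
          have hVsub : Vset (insert (x, j) T) ⊆ (Vset K).erase w := by
            rw [Vset_insert]
            intro y hy
            rw [Finset.mem_erase]
            rcases Finset.mem_insert.mp hy with rfl | hy2
            · exact ⟨Ne.symm hwx, hxVK⟩
            rcases Finset.mem_insert.mp hy2 with rfl | hy3
            · exact ⟨fun h => hwVT (h ▸ hjV), hVTK hjV⟩
            · exact ⟨fun h => hwVT (h ▸ hy3), hVTK hy3⟩
          have hvlt : (Vset (insert (x, j) T)).card < v :=
            calc (Vset (insert (x, j) T)).card ≤ ((Vset K).erase w).card :=
                  Finset.card_le_card hVsub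
              _ < (Vset K).card := Finset.card_erase_lt_of_mem hwVK
              _ = v := hKv
          exact IHv _ hvlt _ (hTins_card j) rfl hF' hI' hcyc htc
  -- the master equation
  have hsum : ∀ nu : n.Partition,
      Ncnt n nu T
        = (Finset.univ.filter (fun j : Fin n => j ∉ Vset T ∧ j ≠ x)).card * Ncnt n nu K
          + ∑ j ∈ Finset.univ.filter (fun j : Fin n => ¬(j ∉ Vset T ∧ j ≠ x)),
              Ncnt n nu (insert (x, j) T) := by
    intro nu
    rw [ncnt_rec nu T x,
      ← Finset.sum_filter_add_sum_filter_not Finset.univ (fun j : Fin n => j ∉ Vset T ∧ j ≠ x)]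
    congr 1
    calc ∑ j ∈ Finset.univ.filter (fun j : Fin n => j ∉ Vset T ∧ j ≠ x),
            Ncnt n nu (insert (x, j) T)
        = ∑ _j ∈ Finset.univ.filter (fun j : Fin n => j ∉ Vset T ∧ j ≠ x), Ncnt n nu K :=
          Finset.sum_congr rfl (fun j hj => by
            rw [Finset.mem_filter] at hj
            exact hfreshN nu j hj.2.1 hj.2.2)
      _ = _ := by rw [Finset.sum_const, smul_eq_mul]
  have hTcross : Ncnt n lam T * (conjClass n mu).card
      = Ncnt n mu T * (conjClass n lam).card :=
    IHt (t - 1) (by omega) (Vset T).card T hTcard rfl hFT hIT hNCT (by omega)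
  have eS : (∑ j ∈ Finset.univ.filter (fun j : Fin n => ¬(j ∉ Vset T ∧ j ≠ x)),
        Ncnt n lam (insert (x, j) T)) * (conjClass n mu).card
      = (∑ j ∈ Finset.univ.filter (fun j : Fin n => ¬(j ∉ Vset T ∧ j ≠ x)),
        Ncnt n mu (insert (x, j) T)) * (conjClass n lam).card := by
    rw [Finset.sum_mul, Finset.sum_mul]
    exact Finset.sum_congr rfl hcross
  have hbig : (Finset.univ.filter (fun j : Fin n => j ∉ Vset T ∧ j ≠ x)).card
        * (Ncnt n lam K * (conjClass n mu).card)
      = (Finset.univ.filter (fun j : Fin n => j ∉ Vset T ∧ j ≠ x)).card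
        * (Ncnt n mu K * (conjClass n lam).card) := by
    have e1 := congrArg (fun z => z * (conjClass n mu).card) (hsum lam)
    have e2 := congrArg (fun z => z * (conjClass n lam).card) (hsum mu)
    simp only [Nat.add_mul] at e1 e2
    rw [eS] at e1
    rw [hTcross] at e1
    rw [e2] at e1
    have h5 := Nat.add_right_cancel e1
    rw [Nat.mul_assoc, Nat.mul_assoc] at h5
    exact h5.symm
  have Fpos : 0 < (Finset.univ.filter (fun j : Fin n => j ∉ Vset T ∧ j ≠ x)).card :=
    Finset.card_pos.mpr ⟨w, Finset.mem_filter.mpr ⟨Finset.mem_univ _, hwVT, hwx⟩⟩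
  exact Nat.eq_of_mul_eq_mul_left Fpos hbig


lemma ncnt_zero_of_nonfunc {lam : n.Partition} {K : Finset (Fin n × Fin n)} {a b b' : Fin n}
    (h1 : (a, b) ∈ K) (h2 : (a, b') ∈ K) (hne : b ≠ b') : Ncnt n lam K = 0 := by
  rw [Ncnt, Finset.card_eq_zero, Finset.filter_eq_empty_iff]
  intro ω _ hsat
  exact hne ((hsat _ h1).symm.trans (hsat _ h2))

lemma class_nonempty {c : ℕ} (hc : 1 ≤ c) (lam : n.Partition)
    (hlam : ∀ p ∈ lam.parts, c + 1 ≤ p) : (conjClass n lam).Nonempty := by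
  obtain ⟨g, hg⟩ := (Equiv.Perm.exists_with_cycleType_iff (Fin n) (m := lam.parts)).mpr
    ⟨by rw [lam.parts_sum, Fintype.card_fin], fun a ha => by have := hlam a ha; omega⟩
  exact ⟨g, mem_conjClass.mpr (by rw [hg, parts_filter lam hlam hc])⟩

lemma key_ratio (c : ℕ) (hc : 1 ≤ c) (lam mu : n.Partition)
    (hlam : ∀ p ∈ lam.parts, c + 1 ≤ p) (hmu : ∀ p ∈ mu.parts, c + 1 ≤ p)
    (K : Finset (Fin n × Fin n)) (hK : K.card ≤ c) :
    (Ncnt n lam K : ℝ) / ((conjClass n lam).card : ℝ)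
      = (Ncnt n mu K : ℝ) / ((conjClass n mu).card : ℝ) := by
  have hl : (0 : ℝ) < ((conjClass n lam).card : ℝ) := by
    exact_mod_cast Finset.card_pos.mpr (class_nonempty hc lam hlam)
  have hm : (0 : ℝ) < ((conjClass n mu).card : ℝ) := by
    exact_mod_cast Finset.card_pos.mpr (class_nonempty hc mu hmu)
  rw [div_eq_div_iff hl.ne' hm.ne']
  have : Ncnt n lam K * (conjClass n mu).card = Ncnt n mu K * (conjClass n lam).card := by
    by_cases hF : FFunc K
    · by_cases hI : IInj K
      · by_cases hC : HasCyc K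
        · rw [ncnt_zero_of_cyc hc hlam hK hC, ncnt_zero_of_cyc hc hmu hK hC,
            Nat.zero_mul, Nat.zero_mul]
        · exact key c hc lam mu hlam hmu K.card (Vset K).card K rfl rfl hF hI hC hK
      · rw [IInj] at hI
        push_neg at hI
        obtain ⟨a, a', b, h1, h2, hne⟩ := hI
        rw [ncnt_zero_of_noninj h1 h2 hne, ncnt_zero_of_noninj h1 h2 hne,
          Nat.zero_mul, Nat.zero_mul]
    · rw [FFunc] at hF
      push_neg at hF
      obtain ⟨a, b, b', h1, h2, hne⟩ := hF
      rw [ncnt_zero_of_nonfunc h1 h2 hne, ncnt_zero_of_nonfunc h1 h2 hne,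
        Nat.zero_mul, Nat.zero_mul]
  exact_mod_cast this

end Stmt17

open Stmt17

theorem stmt17 (n m k : ℕ) (hm : 1 ≤ m) (hk : 1 ≤ k) (lam mu : n.Partition)
    (hlam : ∀ p ∈ lam.parts, m * k + 1 ≤ p) (hmu : ∀ p ∈ mu.parts, m * k + 1 ≤ p)
    (C : Finset (Finset (Fin n × Fin n))) (hsize : ∀ K ∈ C, K.card ≤ m)
    (wt : Finset (Fin n × Fin n) → ℝ) (X : Equiv.Perm (Fin n) → ℝ)
    (hX : ∀ ω, X ω = ∑ K ∈ C, wt K * (if ∀ p ∈ K, ω p.1 = p.2 then 1 else 0)) :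
    (∑ ω ∈ conjClass n lam, X ω ^ k) / ((conjClass n lam).card : ℝ)
      = (∑ ω ∈ conjClass n mu, X ω ^ k) / ((conjClass n mu).card : ℝ) := by
  classical
  have hmk : 1 ≤ m * k := Nat.one_le_iff_ne_zero.mpr (by positivity)
  have hexp : ∀ nu : n.Partition, (∑ ω ∈ conjClass n nu, X ω ^ k)
      = ∑ g ∈ Fintype.piFinset (fun _ : Fin k => C),
          (∏ i, wt (g i)) * ((Ncnt n nu (Finset.univ.biUnion g) : ℝ)) := by
    intro nu
    have h1 : ∀ ω : Equiv.Perm (Fin n), X ω ^ k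
        = ∑ g ∈ Fintype.piFinset (fun _ : Fin k => C),
            (∏ i, wt (g i)) *
              (if ∀ p ∈ Finset.univ.biUnion g, ω p.1 = p.2 then (1:ℝ) else 0) := by
      intro ω
      have e0 : X ω ^ k = ∏ _i : Fin k, X ω := by
        rw [Finset.prod_const, Finset.card_univ, Fintype.card_fin]
      rw [e0]
      simp only [hX]
      rw [Finset.prod_univ_sum]
      apply Finset.sum_congr rfl
      intro g _
      rw [Finset.prod_mul_distrib]
      congr 1
      by_cases hcase : ∀ p ∈ Finset.univ.biUnion g, ω p.1 = p.2
      · rw [if_pos hcase]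
        apply Finset.prod_eq_one
        intro i _
        rw [if_pos]
        intro p hp
        exact hcase p (Finset.mem_biUnion.mpr ⟨i, Finset.mem_univ i, hp⟩)
      · rw [if_neg hcase]
        push_neg at hcase
        obtain ⟨p, hp, hpe⟩ := hcase
        obtain ⟨i, _, hpi⟩ := Finset.mem_biUnion.mp hp
        apply Finset.prod_eq_zero (Finset.mem_univ i)
        rw [if_neg]
        intro hall
        exact hpe (hall p hpi)
    calc (∑ ω ∈ conjClass n nu, X ω ^ k)
        = ∑ ω ∈ conjClass n nu, ∑ g ∈ Fintype.piFinset (fun _ : Fin k => C),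
            (∏ i, wt (g i)) *
              (if ∀ p ∈ Finset.univ.biUnion g, ω p.1 = p.2 then (1:ℝ) else 0) :=
          Finset.sum_congr rfl (fun ω _ => h1 ω)
      _ = ∑ g ∈ Fintype.piFinset (fun _ : Fin k => C), ∑ ω ∈ conjClass n nu,
            (∏ i, wt (g i)) *
              (if ∀ p ∈ Finset.univ.biUnion g, ω p.1 = p.2 then (1:ℝ) else 0) :=
          Finset.sum_comm
      _ = ∑ g ∈ Fintype.piFinset (fun _ : Fin k => C),
            (∏ i, wt (g i)) * ((Ncnt n nu (Finset.univ.biUnion g) : ℝ)) := by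
          apply Finset.sum_congr rfl
          intro g _
          rw [← Finset.mul_sum]
          congr 1
          rw [Finset.sum_boole]
          unfold Ncnt
          norm_num
  rw [hexp lam, hexp mu, Finset.sum_div, Finset.sum_div]
  apply Finset.sum_congr rfl
  intro g hg
  rw [mul_div_assoc, mul_div_assoc]
  congr 1
  apply key_ratio (m * k) hmk lam mu hlam hmu
  calc (Finset.univ.biUnion g).card ≤ ∑ i, (g i).card := Finset.card_biUnion_le
    _ ≤ ∑ _i : Fin k, m := Finset.sum_le_sum (fun i _ =>
        hsize (g i) ((Fintype.mem_piFinset.mp hg) i))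
    _ = m * k := by rw [Finset.sum_const, Finset.card_univ, Fintype.card_fin, smul_eq_mul,
        Nat.mul_comm]
end
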